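/- arXiv:0712.3696 — 4 statements merged into one kernel-verified Lean document; each statement's English description precedes it below -/
import Mathlib

section
/- Assume the triangular array setting with assumptions (A1)(i), (A1)(ii) and (A2). Define φ^M(x) = x − ((x∧M)∨(−M)). Then for every ε > 0 the Lindeberg condition holds: σ_n^{−2} Σ_{i=−k_n}^{k_n} E[ (φ^{ε σ_n}(X_{n,i}))² ] → 0 as n → ∞. -/
open MeasureTheory ProbabilityTheory Filter Finset
open scoped ENNReal NNReal Topology BoundedContinuousFunction

noncomputable section

/-- The `θ₂` dependence coefficient of an `ℝ^m`-valued random variable `ξ` with respect to a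
sub-σ-algebra `ℳ`: the supremum over functions `f : ℝ^m → ℝ` that are `1`-Lipschitz for the
metric `d₁(x,y) = ∑ i, |x i - y i|` of `‖E(f(ξ)|ℳ) - E(f(ξ))‖₂`. -/
def theta2Coef {Ω : Type*} [MeasurableSpace Ω] (P : Measure Ω)
    (ℳ : MeasurableSpace Ω) {m : ℕ} (ξ : Ω → Fin m → ℝ) : ℝ :=
  sSup { r | ∃ f : (Fin m → ℝ) → ℝ, Measurable f ∧
      (∀ x y : Fin m → ℝ, |f x - f y| ≤ ∑ i, |x i - y i|) ∧
      r = (eLpNorm (fun ω => (P[(fun ω' => f (ξ ω')) | ℳ]) ω - ∫ ω', f (ξ ω') ∂P) 2 P).toReal }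

/-- The coefficient `θ_{k,2}(n)` of a sequence `(ξ_i)_{i ∈ ℤ}` with respect to σ-algebras
`(ℳ_i)_{i ∈ ℤ}`:
`max_{1 ≤ l ≤ k} (1/l) sup { θ₂(ℳ_p, (ξ_{j₁}, …, ξ_{j_l})) : p + n ≤ j₁ < … < j_l }`. -/
def thetaK2 {Ω : Type*} [MeasurableSpace Ω] (P : Measure Ω)
    (ℳ : ℤ → MeasurableSpace Ω) (ξ : ℤ → Ω → ℝ) (k n : ℕ) : ℝ :=
  sSup { r | ∃ l : ℕ, 1 ≤ l ∧ l ≤ k ∧ ∃ p : ℤ, ∃ j : Fin l → ℤ,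
      StrictMono j ∧ (∀ s, p + (n : ℤ) ≤ j s) ∧
      r = (1 / l : ℝ) * theta2Coef P (ℳ p) (fun ω s => ξ (j s) ω) }

/-- The coefficient `θ₂(n) = sup_{k ∈ ℕ*} θ_{k,2}(n)`. -/
def theta2Seq {Ω : Type*} [MeasurableSpace Ω] (P : Measure Ω)
    (ℳ : ℤ → MeasurableSpace Ω) (ξ : ℤ → Ω → ℝ) (n : ℕ) : ℝ :=
  sSup { r | ∃ k : ℕ, 1 ≤ k ∧ r = thetaK2 P ℳ ξ k n }

/-- The natural σ-algebras `ℳ_i = σ(ξ_j, j ≤ i)` of a sequence `(ξ_i)_{i ∈ ℤ}`. -/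
def natFilt {Ω : Type*} [MeasurableSpace Ω] (ξ : ℤ → Ω → ℝ) (i : ℤ) : MeasurableSpace Ω :=
  ⨆ j : ℤ, ⨆ _ : j ≤ i, MeasurableSpace.comap (ξ j) inferInstance

/-- Assumption (A3): the coefficient `θ₂(⬝)` is bounded above by a non-negative function `g`
such that `x ↦ x^{3/2} g(x)` is non-increasing (on positive reals) and
`∑_{i=0}^∞ 2^{3i/2} g(2^{iε}) < ∞` for some `0 < ε < 1`. -/
def A3cond (θ : ℕ → ℝ) : Prop :=
  ∃ g : ℝ → ℝ, (∀ x, 0 ≤ g x) ∧ (∀ n : ℕ, θ n ≤ g n) ∧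
    (∀ x y : ℝ, 0 < x → x ≤ y → y ^ (3 / 2 : ℝ) * g y ≤ x ^ (3 / 2 : ℝ) * g x) ∧
    ∃ ε : ℝ, 0 < ε ∧ ε < 1 ∧
      Summable (fun i : ℕ => (2 : ℝ) ^ ((3 * (i : ℝ)) / 2) * g ((2 : ℝ) ^ ((i : ℝ) * ε)))


/-- Pointwise truncation bound. -/
lemma key_trunc (M A C a x : ℝ) (hM : 0 < M) (hA : |a| ≤ A) (hC : C * A ^ 2 ≤ M ^ 2) :
    (a * x - ((a * x ⊓ M) ⊔ (-M))) ^ 2 ≤ a ^ 2 * (if C ≤ x ^ 2 then x ^ 2 else 0) := by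
  have hA0 : 0 ≤ A := le_trans (abs_nonneg a) hA
  have ha2 : a ^ 2 ≤ A ^ 2 := by nlinarith [abs_nonneg a, sq_abs a]
  rcases le_total (a * x) M with h1 | h1
  · rcases le_total (-M) (a * x) with h2 | h2
    · rw [min_eq_left h1, max_eq_left h2, sub_self]
      have : (0:ℝ) ≤ a ^ 2 * (if C ≤ x ^ 2 then x ^ 2 else 0) := by
        rcases le_or_gt C (x ^ 2) with h | h
        · rw [if_pos h]; positivity
        · rw [if_neg (not_le.mpr h)]; simp
      simpa using this
    · -- a*x ≤ -M
      rw [min_eq_left h1, max_eq_right h2]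
      have hax : a * x ≠ 0 := by nlinarith
      have ha : a ≠ 0 := fun h => hax (by simp [h])
      have ha0 : 0 < a ^ 2 := by positivity
      have hCx : C ≤ x ^ 2 := by nlinarith [sq_nonneg x, sq_nonneg (a*x)]
      rw [if_pos hCx]
      nlinarith [sq_nonneg (a * x)]
  · -- M ≤ a*x
    rw [min_eq_right h1, max_eq_left (by linarith : -M ≤ M)]
    have hax : a * x ≠ 0 := by nlinarith
    have ha : a ≠ 0 := fun h => hax (by simp [h])
    have ha0 : 0 < a ^ 2 := by positivity
    have hCx : C ≤ x ^ 2 := by nlinarith [sq_nonneg x, sq_nonneg (a*x)]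
    rw [if_pos hCx]
    nlinarith [sq_nonneg (a * x)]

lemma int_le_of_eLpNorm {Ω : Type*} [MeasurableSpace Ω] {P : Measure Ω}
    {f : Ω → ℝ} (hf : Integrable f P) (h0 : ∀ ω, 0 ≤ f ω) {b : ℝ} (hb : 0 ≤ b)
    (h : eLpNorm f 1 P ≤ ENNReal.ofReal b) : ∫ ω, f ω ∂P ≤ b := by
  have h1 : ENNReal.ofReal (∫ ω, f ω ∂P) = ∫⁻ ω, ENNReal.ofReal (f ω) ∂P :=
    ofReal_integral_eq_lintegral_ofReal hf (ae_of_all _ h0)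
  rw [eLpNorm_one_eq_lintegral_enorm] at h
  have h2 : ∫⁻ ω, ‖f ω‖ₑ ∂P = ∫⁻ ω, ENNReal.ofReal (f ω) ∂P :=
    lintegral_congr fun ω => Real.enorm_eq_ofReal (h0 ω)
  rw [h2, ← h1] at h
  exact (ENNReal.ofReal_le_ofReal_iff hb).mp h

/-- **Lindeberg condition.** In the triangular array setting, under (A1)(i), (A1)(ii) and (A2),
for every `ε > 0`, with `φ^M(x) = x - ((x ∧ M) ∨ (-M))`,
`σ_n^{-2} ∑_{i=-k_n}^{k_n} E[(φ^{ε σ_n}(X_{n,i}))²] → 0` as `n → ∞`. -/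
theorem lindeberg_condition_triangular_array
    {Ω : Type*} [MeasurableSpace Ω] (P : Measure Ω) [IsProbabilityMeasure P]
    (ξ : ℤ → Ω → ℝ)
    (hmeas : ∀ i, Measurable (ξ i))
    (hL2 : ∀ i, MemLp (ξ i) 2 P)
    (hcen : ∀ i, ∫ ω, ξ i ω ∂P = 0)
    (hnonconst : ∀ i, 0 < variance (ξ i) P)
    (k : ℕ → ℕ) (hkmono : Monotone k) (hkpos : ∀ n, 0 < k n)
    (hktop : Tendsto k atTop atTop)
    (a : ℕ → ℤ → ℝ)
    (ha : ∀ n, 0 < ∑ i ∈ Finset.Icc (-(k n : ℤ)) (k n : ℤ), (a n i) ^ 2)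
    (Sn : ℕ → Ω → ℝ)
    (hSn : ∀ n ω, Sn n ω = ∑ i ∈ Finset.Icc (-(k n : ℤ)) (k n : ℤ), a n i * ξ i ω)
    (σ : ℕ → ℝ) (hσ : ∀ n, σ n = Real.sqrt (variance (Sn n) P))
    -- (A1)(i)
    (hA1i : 0 < atTop.liminf (fun n =>
      variance (Sn n) P / ∑ i ∈ Finset.Icc (-(k n : ℤ)) (k n : ℤ), (a n i) ^ 2))
    -- (A1)(ii)
    (hA1ii : Tendsto (fun n => (σ n)⁻¹ *
      (Finset.Icc (-(k n : ℤ)) (k n : ℤ)).sup'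
        (Finset.nonempty_Icc.mpr (neg_le_self (Int.natCast_nonneg _)))
        (fun i => |a n i|)) atTop (𝓝 0))
    -- (A2)
    (hA2 : UniformIntegrable (fun i ω => (ξ i ω) ^ 2) 1 P)
    :
    ∀ ε : ℝ, 0 < ε →
      Tendsto (fun n => ((σ n) ^ 2)⁻¹ *
        ∑ i ∈ Finset.Icc (-(k n : ℤ)) (k n : ℤ),
          ∫ ω, (a n i * ξ i ω - ((a n i * ξ i ω ⊓ ε * σ n) ⊔ (-(ε * σ n)))) ^ 2 ∂P)
        atTop (𝓝 0) := by
  intro ε hε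
  set V : ℕ → ℝ := fun n => variance (Sn n) P with hV
  set T : ℕ → ℝ := fun n => ∑ i ∈ Finset.Icc (-(k n : ℤ)) (k n : ℤ), (a n i) ^ 2 with hT
  -- liminf extraction
  set c : ℝ := atTop.liminf (fun n => V n / T n) / 2 with hc
  have hc0 : 0 < c := by positivity
  have hbdd : atTop.IsBoundedUnder (· ≥ ·) (fun n => V n / T n) :=
    isBoundedUnder_of ⟨0, fun n => div_nonneg (variance_nonneg _ _) (ha n).le⟩
  have hev : ∀ᶠ n in atTop, c < V n / T n :=
    eventually_lt_of_lt_liminf (by simpa [hc] using half_lt_self hA1i) hbdd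
  have hevV : ∀ᶠ n in atTop, c * T n < V n := by
    filter_upwards [hev] with n h
    have := (lt_div_iff₀ (ha n)).mp h
    linarith
  rw [NormedAddCommGroup.tendsto_nhds_zero]
  intro δ hδ
  -- uniform integrability
  obtain ⟨C, hCspec⟩ := hA2.spec one_ne_zero ENNReal.one_ne_top
    (show (0:ℝ) < c * δ / 2 by positivity)
  -- eventually small a/σ
  have hs : (0:ℝ) < Real.sqrt ((C : ℝ) + 1) := Real.sqrt_pos.mpr (by positivity)
  have hevA : ∀ᶠ n in atTop, (σ n)⁻¹ *
      (Finset.Icc (-(k n : ℤ)) (k n : ℤ)).sup'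
        (Finset.nonempty_Icc.mpr (neg_le_self (Int.natCast_nonneg _)))
        (fun i => |a n i|) < ε / Real.sqrt ((C : ℝ) + 1) :=
    hA1ii.eventually_lt_const (by positivity)
  filter_upwards [hevV, hevA] with n hVn hAn
  set A : ℝ := (Finset.Icc (-(k n : ℤ)) (k n : ℤ)).sup'
        (Finset.nonempty_Icc.mpr (neg_le_self (Int.natCast_nonneg _)))
        (fun i => |a n i|) with hA
  have hV0 : 0 < V n := lt_of_le_of_lt (by positivity) hVn
  have hσn : 0 < σ n := by rw [hσ]; exact Real.sqrt_pos.mpr hV0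
  have hσ2 : σ n ^ 2 = V n := by rw [hσ]; exact Real.sq_sqrt (variance_nonneg _ _)
  have h0mem : (0:ℤ) ∈ Finset.Icc (-(k n : ℤ)) (k n : ℤ) :=
    Finset.mem_Icc.mpr ⟨neg_nonpos.mpr (Int.natCast_nonneg _), Int.natCast_nonneg _⟩
  have hA0 : 0 ≤ A := le_trans (abs_nonneg (a n 0)) (Finset.le_sup' (fun i => |a n i|) h0mem)
  -- C * A^2 ≤ (ε σ)^2
  have hAσ : A < σ n * (ε / Real.sqrt ((C : ℝ) + 1)) := by
    have := mul_lt_mul_of_pos_left hAn hσn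
    rwa [← mul_assoc, mul_inv_cancel₀ hσn.ne', one_mul] at this
  have hCA : (C : ℝ) * A ^ 2 ≤ (ε * σ n) ^ 2 := by
    have h2 : A * Real.sqrt ((C : ℝ) + 1) < σ n * ε := by
      have h2' : A < σ n * ε / Real.sqrt ((C : ℝ) + 1) := by
        rwa [mul_div_assoc]
      exact (lt_div_iff₀ hs).mp h2'
    have h3 : (A * Real.sqrt ((C : ℝ) + 1)) ^ 2 < (σ n * ε) ^ 2 :=
      pow_lt_pow_left₀ h2 (by positivity) two_ne_zero
    have h4 : Real.sqrt ((C : ℝ) + 1) ^ 2 = (C : ℝ) + 1 := Real.sq_sqrt (by positivity)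
    nlinarith [sq_nonneg A]
  -- per-index bound
  have hper : ∀ i ∈ Finset.Icc (-(k n : ℤ)) (k n : ℤ),
      ∫ ω, (a n i * ξ i ω - ((a n i * ξ i ω ⊓ ε * σ n) ⊔ (-(ε * σ n)))) ^ 2 ∂P
        ≤ (a n i) ^ 2 * (c * δ / 2) := by
    intro i hi
    set s : Set Ω := { x | C ≤ ‖ξ i x ^ 2‖₊ } with hset
    have hsm : MeasurableSet s := by
      apply measurableSet_le measurable_const
      exact (((hmeas i).pow_const 2).nnnorm)
    have hind : Integrable (s.indicator fun ω => ξ i ω ^ 2) P :=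
      ((hL2 i).integrable_sq).indicator hsm
    have hmem : ∀ ω, (ω ∈ s) ↔ ((C : ℝ) ≤ ξ i ω ^ 2) := by
      intro ω
      simp only [hset, Set.mem_setOf_eq]
      rw [← NNReal.coe_le_coe, coe_nnnorm, Real.norm_eq_abs, abs_of_nonneg (sq_nonneg _)]
    have hptwise : ∀ ω,
        (a n i * ξ i ω - ((a n i * ξ i ω ⊓ ε * σ n) ⊔ (-(ε * σ n)))) ^ 2
          ≤ (a n i) ^ 2 * (s.indicator (fun ω => ξ i ω ^ 2) ω) := by
      intro ω
      have hkey := key_trunc (ε * σ n) A (C : ℝ) (a n i) (ξ i ω)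
        (by positivity) (Finset.le_sup' (fun j => |a n j|) hi) hCA
      rw [Set.indicator_apply]
      refine hkey.trans_eq ?_
      congr 1
      by_cases h : (C : ℝ) ≤ ξ i ω ^ 2
      · rw [if_pos h, if_pos ((hmem ω).mpr h)]
      · rw [if_neg h, if_neg (fun hm => h ((hmem ω).mp hm))]
    calc ∫ ω, (a n i * ξ i ω - ((a n i * ξ i ω ⊓ ε * σ n) ⊔ (-(ε * σ n)))) ^ 2 ∂P
        ≤ ∫ ω, (a n i) ^ 2 * (s.indicator (fun ω => ξ i ω ^ 2) ω) ∂P := by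
          apply integral_mono_of_nonneg (ae_of_all _ fun ω => sq_nonneg _)
            (hind.const_mul _) (ae_of_all _ hptwise)
      _ = (a n i) ^ 2 * ∫ ω, s.indicator (fun ω => ξ i ω ^ 2) ω ∂P := by
          rw [integral_const_mul]
      _ ≤ (a n i) ^ 2 * (c * δ / 2) := by
          apply mul_le_mul_of_nonneg_left _ (sq_nonneg _)
          refine int_le_of_eLpNorm hind ?_ (by positivity) (hCspec i)
          intro ω
          exact Set.indicator_nonneg (fun x _ => sq_nonneg _) ω
  -- conclude
  set S : ℝ := ∑ i ∈ Finset.Icc (-(k n : ℤ)) (k n : ℤ),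
      ∫ ω, (a n i * ξ i ω - ((a n i * ξ i ω ⊓ ε * σ n) ⊔ (-(ε * σ n)))) ^ 2 ∂P with hS
  have hS0 : 0 ≤ S := Finset.sum_nonneg fun i _ => integral_nonneg fun ω => sq_nonneg _
  have hSle : S ≤ V n * (δ / 2) := by
    calc S ≤ ∑ i ∈ Finset.Icc (-(k n : ℤ)) (k n : ℤ), (a n i) ^ 2 * (c * δ / 2) :=
        Finset.sum_le_sum hper
      _ = T n * (c * δ / 2) := by rw [← Finset.sum_mul]
      _ ≤ V n * (δ / 2) := by nlinarith [ha n]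
  rw [Real.norm_eq_abs, abs_of_nonneg (by positivity : (0:ℝ) ≤ (σ n ^ 2)⁻¹ * S)]
  rw [hσ2]
  calc (V n)⁻¹ * S ≤ (V n)⁻¹ * (V n * (δ / 2)) := by
        apply mul_le_mul_of_nonneg_left hSle (by positivity)
    _ = δ / 2 := by field_simp
    _ < δ := by linarith
end
end

section
/- In the random-walk sampling setting, let f ∈ L²(μ) be non-negative with Σ_{x∈ℤ} G(0,x) E_μ(f · f∘T^x) < +∞. Then (1/n) E_ℙ[ E_μ | Σ_{k=0}^n f∘T^{S_k} |² ] converges, as n → ∞, to 2 Σ_{x∈ℤ} G(0,x) E_μ(f · f∘T^x) − E_μ(f²). -/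
open MeasureTheory ProbabilityTheory Filter Finset
open scoped ENNReal NNReal Topology BoundedContinuousFunction

noncomputable section

lemma aux_kron_id (b : ℕ → ℝ) (n : ℕ) :
    ∑ k ∈ Finset.range n, (k : ℝ) * b k
      = n * (∑ k ∈ Finset.range n, b k)
        - ∑ j ∈ Finset.range n, ∑ k ∈ Finset.range (j + 1), b k := by
  induction n with
  | zero => simp
  | succ n ih =>
    rw [Finset.sum_range_succ, ih,
      Finset.sum_range_succ (f := fun j => ∑ k ∈ Finset.range (j + 1), b k),
      Finset.sum_range_succ (f := b)]
    push_cast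
    ring

lemma aux_kronecker {b : ℕ → ℝ} (hb : Summable b) :
    Tendsto (fun n : ℕ => (n : ℝ)⁻¹ * ∑ k ∈ Finset.range n, (k : ℝ) * b k) atTop (𝓝 0) := by
  have ht : Tendsto (fun n => ∑ k ∈ Finset.range n, b k) atTop (𝓝 (∑' k, b k)) :=
    hb.hasSum.tendsto_sum_nat
  have ht' : Tendsto (fun j : ℕ => ∑ k ∈ Finset.range (j + 1), b k) atTop (𝓝 (∑' k, b k)) :=
    ht.comp (tendsto_add_atTop_nat 1)
  have hc := ht'.cesaro
  have hsub := ht.sub hc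
  rw [sub_self] at hsub
  apply hsub.congr'
  filter_upwards [eventually_ge_atTop 1] with n hn
  have hn' : (n : ℝ) ≠ 0 := Nat.cast_ne_zero.2 (by omega)
  rw [aux_kron_id]
  field_simp

lemma aux_double_sum (g : ℕ → ℝ) (N : ℕ) :
    ∑ m ∈ Finset.range N, ∑ m' ∈ Finset.range N, g ((m' : ℤ) - (m : ℤ)).natAbs
      = N * g 0 + 2 * ∑ d ∈ Finset.range N, ((N : ℝ) - (d + 1)) * g (d + 1) := by
  induction N with
  | zero => simp
  | succ N ih =>
    have hcross : ∑ m ∈ Finset.range N, g (((N : ℕ) : ℤ) - (m : ℤ)).natAbs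
        = ∑ d ∈ Finset.range N, g (d + 1) := by
      rw [← Finset.sum_range_reflect (fun m => g (((N : ℕ) : ℤ) - (m : ℤ)).natAbs) N]
      apply Finset.sum_congr rfl
      intro j hj
      simp only [Finset.mem_range] at hj
      congr 1
      omega
    have hcross' : ∑ m' ∈ Finset.range N, g ((m' : ℤ) - ((N : ℕ) : ℤ)).natAbs
        = ∑ d ∈ Finset.range N, g (d + 1) := by
      rw [← hcross]
      apply Finset.sum_congr rfl
      intro j _
      congr 1
      omega
    have hsplit : ∑ d ∈ Finset.range N, (((N + 1 : ℕ) : ℝ) - ((d : ℝ) + 1)) * g (d + 1)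
        = ∑ d ∈ Finset.range N, ((N : ℝ) - ((d : ℝ) + 1)) * g (d + 1)
          + ∑ d ∈ Finset.range N, g (d + 1) := by
      rw [← Finset.sum_add_distrib]
      apply Finset.sum_congr rfl
      intro d _
      push_cast
      ring
    rw [Finset.sum_range_succ]
    simp only [Finset.sum_range_succ]
    rw [Finset.sum_add_distrib, ih, hcross, hcross', hsplit]
    simp only [sub_self, Int.natAbs_zero]
    push_cast
    ring



lemma aux_map_add_of_indep {Ω : Type*} [MeasurableSpace Ω] {P : Measure Ω} [IsFiniteMeasure P]
    {f g f' g' : Ω → ℤ} (hf : Measurable f) (hg : Measurable g) (hf' : Measurable f')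
    (hg' : Measurable g') (hind : IndepFun f g P) (hind' : IndepFun f' g' P)
    (h1 : Measure.map f P = Measure.map f' P) (h2 : Measure.map g P = Measure.map g' P) :
    Measure.map (fun ω => f ω + g ω) P = Measure.map (fun ω => f' ω + g' ω) P := by
  have e : (fun ω => f ω + g ω)
      = (fun p : ℤ × ℤ => p.1 + p.2) ∘ (fun ω => (f ω, g ω)) := rfl
  have e' : (fun ω => f' ω + g' ω)
      = (fun p : ℤ × ℤ => p.1 + p.2) ∘ (fun ω => (f' ω, g' ω)) := rfl
  rw [e, e', ← Measure.map_map measurable_add (hf.prodMk hg),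
    ← Measure.map_map measurable_add (hf'.prodMk hg'),
    (indepFun_iff_map_prod_eq_prod_map_map hf.aemeasurable hg.aemeasurable).mp hind,
    (indepFun_iff_map_prod_eq_prod_map_map hf'.aemeasurable hg'.aemeasurable).mp hind',
    h1, h2]

lemma aux_law_sum {Ω : Type*} [MeasurableSpace Ω] {P : Measure Ω} [IsProbabilityMeasure P]
    (X : ℕ → Ω → ℤ) (hXmeas : ∀ i, Measurable (X i))
    (hXindep : iIndepFun X P)
    (hXident : ∀ i, Measure.map (X i) P = Measure.map (X 0) P) :
    ∀ (n : ℕ) (s : Finset ℕ), s.card = n →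
      Measure.map (fun ω => ∑ i ∈ s, X i ω) P
        = Measure.map (fun ω => ∑ i ∈ Finset.range n, X i ω) P := by
  intro n
  induction n with
  | zero =>
    intro s hs
    rw [Finset.card_eq_zero] at hs
    subst hs
    simp
  | succ n ih =>
    intro s hs
    have hne : s.Nonempty := Finset.card_pos.mp (by omega)
    set j := s.max' hne with hj
    have hjmem : j ∈ s := s.max'_mem hne
    have hcard : (s.erase j).card = n := by
      rw [Finset.card_erase_of_mem hjmem, hs]; omega
    have hsum : (fun ω => ∑ i ∈ s, X i ω)
        = fun ω => (∑ i ∈ s.erase j, X i ω) + X j ω := by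
      funext ω
      rw [Finset.sum_erase_add s _ hjmem]
    have hsum' : (fun ω => ∑ i ∈ Finset.range (n + 1), X i ω)
        = fun ω => (∑ i ∈ Finset.range n, X i ω) + X n ω := by
      funext ω
      rw [Finset.sum_range_succ]
    have hind : IndepFun (fun ω => ∑ i ∈ s.erase j, X i ω) (X j) P := by
      have := hXindep.indepFun_finsetSum_of_notMem hXmeas (Finset.notMem_erase j s)
      convert this using 2
      simp [Finset.sum_apply]
    have hind' : IndepFun (fun ω => ∑ i ∈ Finset.range n, X i ω) (X n) P := by
      have := hXindep.indepFun_finsetSum_of_notMem hXmeas (Finset.notMem_range_self (n := n))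
      convert this using 2
      simp [Finset.sum_apply]
    rw [hsum, hsum']
    exact aux_map_add_of_indep
      (Finset.measurable_sum _ fun i _ => hXmeas i) (hXmeas j)
      (Finset.measurable_sum _ fun i _ => hXmeas i) (hXmeas n)
      hind hind' (ih _ hcard) ((hXident j).trans (hXident n).symm)

/-- In the random-walk sampling setting, for non-negative `f ∈ L²(μ)` with
`∑_{x∈ℤ} G(0,x) E_μ(f ⬝ f∘T^x) < ∞`,
`n⁻¹ E_ℙ[E_μ |∑_{k=0}^n f∘T^{S_k}|²]` converges to
`2 ∑_{x∈ℤ} G(0,x) E_μ(f ⬝ f∘T^x) - E_μ(f²)` as `n → ∞`. -/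
theorem mean_variance_sampled_sum_tendsto
    {E : Type*} [MeasurableSpace E] (μ : Measure E) [IsProbabilityMeasure μ]
    (T : Equiv.Perm E) (hT : Measurable T) (hTinv : Measurable T.symm)
    (hTpres : MeasurePreserving T μ μ)
    {Ω : Type*} [MeasurableSpace Ω] (P : Measure Ω) [IsProbabilityMeasure P]
    (X : ℕ → Ω → ℤ) (hXmeas : ∀ i, Measurable (X i))
    (hXindep : iIndepFun X P)
    (hXident : ∀ i, Measure.map (X i) P = Measure.map (X 0) P)
    (S : ℕ → Ω → ℤ) (hS : ∀ n ω, S n ω = ∑ i ∈ Finset.range n, X i ω)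
    -- transience: the Green function `G(0,x) = ∑_k ℙ(S_k = x)` is finite
    (hGreen : ∀ x : ℤ, Summable (fun m : ℕ => (P {ω | S m ω = x}).toReal))
    (G : ℤ → ℝ) (hG : ∀ x : ℤ, G x = ∑' m : ℕ, (P {ω | S m ω = x}).toReal)
    (f : E → ℝ) (hf : Measurable f) (hfL2 : MemLp f 2 μ)
    (hfpos : ∀ e, 0 ≤ f e)
    (hsum : Summable (fun x : ℤ => G x * ∫ e, f e * f ((T ^ x) e) ∂μ)) :
    Tendsto (fun n : ℕ => (n : ℝ)⁻¹ *
        ∫ ω, (∫ e, (∑ m ∈ Finset.range (n + 1), f ((T ^ (S m ω)) e)) ^ 2 ∂μ) ∂P)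
      atTop
      (𝓝 (2 * ∑' x : ℤ, G x * ∫ e, f e * f ((T ^ x) e) ∂μ - ∫ e, (f e) ^ 2 ∂μ)) := by
  classical
  -- ## Powers of T are measurable and measure preserving
  have hmeasPow : ∀ x : ℤ, Measurable (⇑(T ^ x : Equiv.Perm E)) := by
    intro x
    induction x using Int.induction_on with
    | zero => simpa using measurable_id
    | succ n ih =>
      rw [zpow_add_one]
      simp only [Equiv.Perm.coe_mul]
      exact ih.comp hT
    | pred n ih =>
      rw [zpow_sub_one]
      simp only [Equiv.Perm.coe_mul]
      refine ih.comp ?_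
      rw [Equiv.Perm.inv_def]
      exact hTinv
  have hTsymm_pres : MeasurePreserving (⇑T.symm) μ μ := by
    refine ⟨hTinv, ?_⟩
    conv_lhs => rw [← hTpres.map_eq]
    rw [Measure.map_map hTinv hT]
    have : (⇑T.symm ∘ ⇑T) = id := by funext e; simp
    rw [this, Measure.map_id]
  have hprePow : ∀ x : ℤ, MeasurePreserving (⇑(T ^ x : Equiv.Perm E)) μ μ := by
    intro x
    induction x using Int.induction_on with
    | zero => simpa using MeasurePreserving.id μ
    | succ n ih =>
      rw [zpow_add_one]
      simp only [Equiv.Perm.coe_mul]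
      exact ih.comp hTpres
    | pred n ih =>
      rw [zpow_sub_one]
      simp only [Equiv.Perm.coe_mul]
      refine ih.comp ?_
      rw [Equiv.Perm.inv_def]
      exact hTsymm_pres
  have hinvPow : ∀ x : ℤ, Measurable (⇑(T ^ x : Equiv.Perm E).symm) := by
    intro x
    have := hmeasPow (-x)
    rwa [zpow_neg, Equiv.Perm.inv_def] at this
  let Teq : ℤ → (E ≃ᵐ E) := fun x =>
    { toEquiv := (T ^ x : Equiv.Perm E)
      measurable_toFun := hmeasPow x
      measurable_invFun := hinvPow x }
  have hcomp : ∀ (x : ℤ) (g : E → ℝ), ∫ e, g ((T ^ x : Equiv.Perm E) e) ∂μ = ∫ e, g e ∂μ :=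
    fun x g => (hprePow x).integral_comp (Teq x).measurableEmbedding g
  -- ## the correlation function φ
  set φ : ℤ → ℝ := fun x => ∫ e, f e * f ((T ^ x : Equiv.Perm E) e) ∂μ with hφdef
  have hφ_nonneg : ∀ x, 0 ≤ φ x := fun x =>
    integral_nonneg fun e => mul_nonneg (hfpos e) (hfpos _)
  have hfx : ∀ x : ℤ, MemLp (fun e => f ((T ^ x : Equiv.Perm E) e)) 2 μ := fun x =>
    hfL2.comp_measurePreserving (hprePow x)
  have hint : ∀ a b : ℤ,
      Integrable (fun e => f ((T ^ a : Equiv.Perm E) e) * f ((T ^ b : Equiv.Perm E) e)) μ := by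
    intro a b
    rw [← memLp_one_iff_integrable]
    have h := (hfx b).smul (hfx a) (p := 2) (q := 2) (r := 1)
    exact h
  have hint0 : ∀ x : ℤ, Integrable (fun e => f e * f ((T ^ x : Equiv.Perm E) e)) μ := by
    intro x
    rw [← memLp_one_iff_integrable]
    exact (hfx x).smul hfL2 (p := 2) (q := 2) (r := 1)
  have hpow_apply : ∀ a b : ℤ, ∀ e : E,
      (T ^ b : Equiv.Perm E) ((T ^ a : Equiv.Perm E) e) = (T ^ (b + a) : Equiv.Perm E) e := by
    intro a b e
    rw [← Equiv.Perm.mul_apply, ← zpow_add]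
  have hphi_eq : ∀ a b : ℤ,
      ∫ e, f ((T ^ a : Equiv.Perm E) e) * f ((T ^ b : Equiv.Perm E) e) ∂μ = φ (b - a) := by
    intro a b
    have h2 : ∀ e : E, f ((T ^ b : Equiv.Perm E) e)
        = f ((T ^ (b - a) : Equiv.Perm E) ((T ^ a : Equiv.Perm E) e)) := by
      intro e
      rw [hpow_apply, sub_add_cancel]
    simp_rw [h2]
    exact hcomp a (fun e' => f e' * f ((T ^ (b - a) : Equiv.Perm E) e'))
  have hphi_zero : φ 0 = ∫ e, (f e) ^ 2 ∂μ := by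
    rw [hφdef]
    simp only [zpow_zero, Equiv.Perm.coe_one, id_eq, ← sq]
  have hphi_le : ∀ x, φ x ≤ φ 0 := by
    intro x
    have hI1 : Integrable (fun e => (f e) ^ 2) μ := hfL2.integrable_sq
    have hI2 : Integrable (fun e => (f ((T ^ x : Equiv.Perm E) e)) ^ 2) μ := (hfx x).integrable_sq
    have hmono : φ x ≤ ∫ e, ((f e) ^ 2 + (f ((T ^ x : Equiv.Perm E) e)) ^ 2) / 2 ∂μ := by
      apply integral_mono (hint0 x) ((hI1.add hI2).div_const 2)
      intro e
      have := two_mul_le_add_sq (f e) (f ((T ^ x : Equiv.Perm E) e))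
      dsimp
      nlinarith [this]
    have heq : ∫ e, ((f e) ^ 2 + (f ((T ^ x : Equiv.Perm E) e)) ^ 2) / 2 ∂μ = φ 0 := by
      rw [integral_div, integral_add hI1 hI2, hcomp x (fun e => (f e) ^ 2), hphi_zero]
      ring
    linarith [hmono, heq.le, heq.ge]
  -- ## symmetry of φ
  have hφsymm : ∀ x : ℤ, φ (-x) = φ x := by
    intro x
    have h2 : ∀ e : E, f ((T ^ (-x) : Equiv.Perm E) ((T ^ x : Equiv.Perm E) e)) = f e := by
      intro e
      rw [hpow_apply, neg_add_cancel]
      simp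
    have := hcomp x (fun e' => f e' * f ((T ^ (-x) : Equiv.Perm E) e'))
    simp only [h2] at this
    calc φ (-x) = ∫ e, f ((T ^ x : Equiv.Perm E) e) * f e ∂μ := this.symm
    _ = φ x := by rw [hφdef]; simp only [mul_comm]
  -- ## measurability of S and integrability of φ ∘ (ℤ-valued r.v.)
  have hSmeas : ∀ d : ℕ, Measurable (S d) := by
    intro d
    have : S d = fun ω => ∑ i ∈ Finset.range d, X i ω := funext fun ω => hS d ω
    rw [this]
    exact Finset.measurable_sum _ fun i _ => hXmeas i
  have hYint : ∀ (Y : Ω → ℤ), Measurable Y → Integrable (fun ω => φ (Y ω)) P := by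
    intro Y hY
    refine Integrable.mono' (integrable_const (φ 0)) ?_ ?_
    · exact ((measurable_of_countable φ).comp hY).aestronglyMeasurable
    · filter_upwards with ω
      rw [Real.norm_eq_abs, abs_of_nonneg (hφ_nonneg _)]
      exact hphi_le _
  -- ## the sequence a d = E_P[φ(S_d)]
  set a : ℕ → ℝ := fun d => ∫ ω, φ (S d ω) ∂P with hadef
  have ha_nonneg : ∀ d, 0 ≤ a d := fun d => integral_nonneg fun ω => hφ_nonneg _
  have ha_zero : a 0 = φ 0 := by
    rw [hadef]
    have : ∀ ω : Ω, S 0 ω = 0 := by intro ω; rw [hS]; simp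
    simp only [this]
    rw [integral_const]
    simp
  -- ## law of S m' - S m
  have hlaw := aux_law_sum X hXmeas hXindep hXident
  have hdist : ∀ m m' : ℕ, m ≤ m' →
      Measure.map (fun ω => S m' ω - S m ω) P = Measure.map (S (m' - m)) P := by
    intro m m' hmm
    have h1 : (fun ω => S m' ω - S m ω) = fun ω => ∑ i ∈ Finset.Ico m m', X i ω := by
      funext ω
      rw [hS, hS, Finset.sum_Ico_eq_sub _ hmm]
    have h2 : (S (m' - m)) = fun ω => ∑ i ∈ Finset.range (m' - m), X i ω :=
      funext fun ω => hS _ ω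
    rw [h1, h2, hlaw (m' - m) (Finset.Ico m m') (by rw [Nat.card_Ico])]
  have hkey : ∀ m m' : ℕ, m ≤ m' → ∫ ω, φ (S m' ω - S m ω) ∂P = a (m' - m) := by
    intro m m' hmm
    have hY : Measurable (fun ω => S m' ω - S m ω) := (hSmeas m').sub (hSmeas m)
    have hφm : Measurable φ := measurable_of_countable φ
    rw [hadef]
    calc ∫ ω, φ (S m' ω - S m ω) ∂P
        = ∫ y, φ y ∂(Measure.map (fun ω => S m' ω - S m ω) P) := by
          rw [integral_map hY.aemeasurable hφm.stronglyMeasurable.aestronglyMeasurable]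
    _ = ∫ y, φ y ∂(Measure.map (S (m' - m)) P) := by rw [hdist m m' hmm]
    _ = ∫ ω, φ (S (m' - m) ω) ∂P := by
          rw [integral_map (hSmeas _).aemeasurable hφm.stronglyMeasurable.aestronglyMeasurable]
  have ha_eq : ∀ m m' : ℕ, ∫ ω, φ (S m' ω - S m ω) ∂P = a (((m' : ℤ) - (m : ℤ)).natAbs) := by
    intro m m'
    rcases le_total m m' with h | h
    · rw [hkey m m' h]
      congr 1
      omega
    · have hpt : (fun ω => φ (S m' ω - S m ω)) = fun ω => φ (S m ω - S m' ω) := by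
        funext ω
        rw [show S m' ω - S m ω = -(S m ω - S m' ω) by ring, hφsymm]
      rw [hpt, hkey m' m h]
      congr 1
      omega
  -- ## the inner integral as a double sum
  have hφSint : ∀ m m' : ℕ, Integrable (fun ω => φ (S m' ω - S m ω)) P :=
    fun m m' => hYint _ ((hSmeas m').sub (hSmeas m))
  have hinner : ∀ (ω : Ω) (n : ℕ),
      ∫ e, (∑ m ∈ Finset.range (n + 1), f ((T ^ (S m ω) : Equiv.Perm E) e)) ^ 2 ∂μ
        = ∑ m ∈ Finset.range (n + 1), ∑ m' ∈ Finset.range (n + 1), φ (S m' ω - S m ω) := by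
    intro ω n
    have hsq : ∀ e : E, (∑ m ∈ Finset.range (n + 1), f ((T ^ (S m ω) : Equiv.Perm E) e)) ^ 2
        = ∑ m ∈ Finset.range (n + 1), ∑ m' ∈ Finset.range (n + 1),
            f ((T ^ (S m ω) : Equiv.Perm E) e) * f ((T ^ (S m' ω) : Equiv.Perm E) e) := by
      intro e
      rw [sq, Finset.sum_mul_sum]
    simp_rw [hsq]
    rw [integral_finset_sum _ (fun m _ => integrable_finset_sum _ (fun m' _ => hint _ _))]
    apply Finset.sum_congr rfl
    intro m _
    rw [integral_finset_sum _ (fun m' _ => hint _ _)]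
    apply Finset.sum_congr rfl
    intro m' _
    exact hphi_eq (S m ω) (S m' ω)
  -- ## the full double integral
  have houter : ∀ n : ℕ,
      ∫ ω, (∫ e, (∑ m ∈ Finset.range (n + 1), f ((T ^ (S m ω) : Equiv.Perm E) e)) ^ 2 ∂μ) ∂P
        = ((n + 1 : ℕ) : ℝ) * a 0
          + 2 * ∑ d ∈ Finset.range (n + 1), (((n + 1 : ℕ) : ℝ) - ((d : ℝ) + 1)) * a (d + 1) := by
    intro n
    have h1 : (fun ω =>
        ∫ e, (∑ m ∈ Finset.range (n + 1), f ((T ^ (S m ω) : Equiv.Perm E) e)) ^ 2 ∂μ)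
        = fun ω => ∑ m ∈ Finset.range (n + 1), ∑ m' ∈ Finset.range (n + 1),
            φ (S m' ω - S m ω) := funext fun ω => hinner ω n
    rw [h1, integral_finset_sum _ (fun m _ => integrable_finset_sum _ (fun m' _ => hφSint m m'))]
    have h2 : ∑ m ∈ Finset.range (n + 1), ∫ ω, (∑ m' ∈ Finset.range (n + 1),
          φ (S m' ω - S m ω)) ∂P
        = ∑ m ∈ Finset.range (n + 1), ∑ m' ∈ Finset.range (n + 1),
            a (((m' : ℤ) - (m : ℤ)).natAbs) := by
      apply Finset.sum_congr rfl
      intro m _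
      rw [integral_finset_sum _ (fun m' _ => hφSint m m')]
      exact Finset.sum_congr rfl fun m' _ => ha_eq m m'
    rw [h2, aux_double_sum a (n + 1)]
  -- ## summability of a and identification of its sum
  set Φ : ℤ → ℝ≥0∞ := fun x => ENNReal.ofReal (φ x) with hΦdef
  set aE : ℕ → ℝ≥0∞ := fun d => ∫⁻ ω, Φ (S d ω) ∂P with haEdef
  have hΦmeas : Measurable Φ := measurable_of_countable Φ
  have haE_le : ∀ d, aE d ≤ ENNReal.ofReal (φ 0) := by
    intro d
    rw [haEdef]
    calc ∫⁻ ω, Φ (S d ω) ∂P ≤ ∫⁻ _, ENNReal.ofReal (φ 0) ∂P :=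
      lintegral_mono fun ω => ENNReal.ofReal_le_ofReal (hphi_le _)
    _ = ENNReal.ofReal (φ 0) := by rw [lintegral_const, measure_univ, mul_one]
  have haE_ne_top : ∀ d, aE d ≠ ∞ :=
    fun d => ne_top_of_le_ne_top ENNReal.ofReal_ne_top (haE_le d)
  have hofReal_a : ∀ d, ENNReal.ofReal (a d) = aE d := by
    intro d
    rw [hadef, haEdef]
    exact ofReal_integral_eq_lintegral_ofReal (hYint _ (hSmeas d))
      (Filter.Eventually.of_forall fun ω => hφ_nonneg _)
  have haE_tsum : ∀ d, aE d = ∑' x : ℤ, Φ x * P {ω | S d ω = x} := by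
    intro d
    rw [haEdef]
    calc ∫⁻ ω, Φ (S d ω) ∂P = ∫⁻ y, Φ y ∂(Measure.map (S d) P) :=
      (lintegral_map hΦmeas (hSmeas d)).symm
    _ = ∑' x : ℤ, Φ x * (Measure.map (S d) P) {x} := lintegral_countable' Φ
    _ = ∑' x : ℤ, Φ x * P {ω | S d ω = x} := by
        apply tsum_congr
        intro x
        rw [Measure.map_apply (hSmeas d) (measurableSet_singleton x)]
        rfl
  have hG_nonneg : ∀ x, 0 ≤ G x := by
    intro x
    rw [hG]
    exact tsum_nonneg fun m => ENNReal.toReal_nonneg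
  have hGE : ∀ x : ℤ, (∑' d : ℕ, P {ω | S d ω = x}) = ENNReal.ofReal (G x) := by
    intro x
    rw [hG x, ENNReal.ofReal_tsum_of_nonneg (fun m => ENNReal.toReal_nonneg) (hGreen x)]
    exact tsum_congr fun d => (ENNReal.ofReal_toReal (measure_ne_top P _)).symm
  have hswap : ∑' d : ℕ, aE d = ENNReal.ofReal (∑' x : ℤ, G x * φ x) := by
    calc ∑' d : ℕ, aE d = ∑' d : ℕ, ∑' x : ℤ, Φ x * P {ω | S d ω = x} := by
          exact tsum_congr haE_tsum
    _ = ∑' x : ℤ, ∑' d : ℕ, Φ x * P {ω | S d ω = x} := ENNReal.tsum_comm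
    _ = ∑' x : ℤ, Φ x * ∑' d : ℕ, P {ω | S d ω = x} := by
          exact tsum_congr fun x => ENNReal.tsum_mul_left
    _ = ∑' x : ℤ, ENNReal.ofReal (G x * φ x) := by
          apply tsum_congr
          intro x
          rw [hGE x, hΦdef, ENNReal.ofReal_mul (hG_nonneg x), mul_comm]
    _ = ENNReal.ofReal (∑' x : ℤ, G x * φ x) := by
          rw [ENNReal.ofReal_tsum_of_nonneg
            (fun x => mul_nonneg (hG_nonneg x) (hφ_nonneg x)) hsum]
  have hsumaE_ne_top : (∑' d : ℕ, aE d) ≠ ∞ := by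
    rw [hswap]; exact ENNReal.ofReal_ne_top
  have ha_toReal : a = fun d => (aE d).toReal := by
    funext d
    rw [← hofReal_a d, ENNReal.toReal_ofReal (ha_nonneg d)]
  have hsummable_a : Summable a := by
    rw [ha_toReal]
    exact ENNReal.summable_toReal hsumaE_ne_top
  have htsum_a : ∑' d : ℕ, a d = ∑' x : ℤ, G x * φ x := by
    rw [ha_toReal, ← ENNReal.tsum_toReal_eq haE_ne_top, hswap,
      ENNReal.toReal_ofReal (tsum_nonneg fun x => mul_nonneg (hG_nonneg x) (hφ_nonneg x))]
  -- ## limit assembly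
  set L : ℝ := ∑' x : ℤ, G x * φ x with hLdef
  have hb : Summable (fun d : ℕ => a (d + 1)) := (summable_nat_add_iff 1).mpr hsummable_a
  have htail : ∑' d : ℕ, a (d + 1) = L - a 0 := by
    have h := hsummable_a.tsum_eq_zero_add
    rw [htsum_a] at h
    rw [hLdef]
    linarith [h]
  have hrat : Tendsto (fun n : ℕ => ((n + 1 : ℕ) : ℝ) / (n : ℝ)) atTop (𝓝 1) := by
    have h0 : Tendsto (fun n : ℕ => 1 + (n : ℝ)⁻¹) atTop (𝓝 1) := by
      have h1 : Tendsto (fun _ : ℕ => (1 : ℝ)) atTop (𝓝 1) := tendsto_const_nhds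
      simpa using h1.add tendsto_inv_atTop_nhds_zero_nat
    apply h0.congr'
    filter_upwards [eventually_ge_atTop 1] with n hn
    have hn' : (n : ℝ) ≠ 0 := Nat.cast_ne_zero.2 (by omega)
    push_cast
    field_simp
  have t2 : Tendsto (fun n : ℕ => ∑ d ∈ Finset.range (n + 1), a (d + 1)) atTop
      (𝓝 (L - a 0)) := by
    have h := hb.hasSum.tendsto_sum_nat
    rw [htail] at h
    exact h.comp (tendsto_add_atTop_nat 1)
  have t3 : Tendsto (fun n : ℕ => (n : ℝ)⁻¹ * ∑ d ∈ Finset.range (n + 1), (d : ℝ) * a (d + 1))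
      atTop (𝓝 0) := by
    have hk1 : Tendsto (fun n : ℕ => ((n + 1 : ℕ) : ℝ)⁻¹ *
        ∑ d ∈ Finset.range (n + 1), (d : ℝ) * a (d + 1)) atTop (𝓝 0) :=
      (aux_kronecker hb).comp (tendsto_add_atTop_nat 1)
    have h := hrat.mul hk1
    rw [mul_zero] at h
    apply h.congr'
    filter_upwards [eventually_ge_atTop 1] with n hn
    have hn' : (n : ℝ) ≠ 0 := Nat.cast_ne_zero.2 (by omega)
    have hn1 : ((n + 1 : ℕ) : ℝ) ≠ 0 := Nat.cast_ne_zero.2 (by omega)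
    field_simp
  have tfin : Tendsto (fun n : ℕ => ((n + 1 : ℕ) : ℝ) / (n : ℝ) * a 0
      + 2 * ((∑ d ∈ Finset.range (n + 1), a (d + 1))
        - (n : ℝ)⁻¹ * ∑ d ∈ Finset.range (n + 1), (d : ℝ) * a (d + 1))) atTop
      (𝓝 (1 * a 0 + 2 * ((L - a 0) - 0))) :=
    (hrat.mul_const (a 0)).add ((t2.sub t3).const_mul 2)
  have hval : (2 * L - ∫ e, (f e) ^ 2 ∂μ) = 1 * a 0 + 2 * ((L - a 0) - 0) := by
    rw [ha_zero, hphi_zero]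
    ring
  rw [hval]
  apply tfin.congr'
  filter_upwards [eventually_ge_atTop 1] with n hn
  rw [houter n]
  have hsp : ∑ d ∈ Finset.range (n + 1), (((n + 1 : ℕ) : ℝ) - ((d : ℝ) + 1)) * a (d + 1)
      = (n : ℝ) * (∑ d ∈ Finset.range (n + 1), a (d + 1))
        - ∑ d ∈ Finset.range (n + 1), (d : ℝ) * a (d + 1) := by
    rw [Finset.mul_sum, ← Finset.sum_sub_distrib]
    apply Finset.sum_congr rfl
    intro d _
    push_cast
    ring
  rw [hsp]
  have hn' : (n : ℝ) ≠ 0 := Nat.cast_ne_zero.2 (by omega)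
  push_cast
  field_simp
end
end

section
/- Let (ε_i)_{i∈ℤ} be a stationary sequence of random variables with values in a measurable space S, and let H be a measurable function on a subset of S^ℕ such that ξ_n = H(ε_n, ε_{n−1}, ε_{n−2}, …) is defined almost surely and is square-integrable (a causal function of (ε_i)). Suppose there exists a stationary sequence (ε'_i)_{i∈ℤ} distributed as (ε_i)_{i∈ℤ} and independent of (ε_i)_{i≤0}, and set ξ*_n = H(ε'_n, ε'_{n−1}, ε'_{n−2}, …). Let ℳ_i = σ(ξ_j, j ≤ i), and let (δ₂(i))_{i>0} be a non-increasing sequence such that ‖E(|ξ_i − ξ*_i| | ℳ₀)‖₂ ≤ δ₂(i) for all i > 0. Then the coefficient θ₂ of the sequence (ξ_n) satisfies θ₂(i) ≤ δ₂(i) for all i ≥ 1. -/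
open MeasureTheory ProbabilityTheory Filter Finset
open scoped ENNReal NNReal Topology BoundedContinuousFunction

noncomputable section

/-- helper: a σ-algebra generated by coordinates up to `p`. -/
def cylFilt {X : Type*} (C : ℤ → MeasurableSpace X) (p : ℤ) : MeasurableSpace X :=
  ⨆ r : ℤ, ⨆ _ : r ≤ p, C r

theorem cylFilt_shift {X : Type*} (C : ℤ → MeasurableSpace X) (p : ℤ) :
    (⨆ r : ℤ, ⨆ _ : r ≤ (0:ℤ), C (r + p)) = cylFilt C p := by
  apply le_antisymm
  · exact iSup₂_le fun r hr => le_iSup₂_of_le (r + p) (by omega) le_rfl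
  · refine iSup₂_le fun r hr => le_iSup₂_of_le (r - p) (by omega) ?_
    have h : r - p + p = r := by omega
    rw [h]

/-- Conditional expectation is an L² contraction. -/
theorem eLpNorm_two_condexp_le {α : Type*} {m m0 : MeasurableSpace α} {μ : Measure α}
    [IsFiniteMeasure μ] (hm : m ≤ m0) {f : α → ℝ} (hf : MemLp f 2 μ) :
    eLpNorm (μ[f|m]) 2 μ ≤ eLpNorm f 2 μ := by
  haveI : SigmaFinite (μ.trim hm) := (isFiniteMeasure_trim hm).toSigmaFinite
  set g : α → ℝ := ⇑((condExpL2 ℝ ℝ hm (hf.toLp f) : lpMeas ℝ ℝ m 2 μ) : α →₂[μ] ℝ) with hg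
  have hgce : g =ᵐ[μ] μ[f|m] := by
    refine ae_eq_condExp_of_forall_setIntegral_eq hm (hf.integrable one_le_two) ?_ ?_ ?_
    · intro s _ hμs
      exact (integrableOn_condExpL2_of_measure_ne_top hm hμs.ne _)
    · intro s hs hμs
      rw [integral_condExpL2_eq hm (hf.toLp f) hs hμs.ne]
      exact setIntegral_congr_ae (hm s hs) ((hf.coeFn_toLp).mono fun x hx _ => hx)
    · exact (aestronglyMeasurable_condExpL2 hm _)
  calc eLpNorm (μ[f|m]) 2 μ = eLpNorm g 2 μ := (eLpNorm_congr_ae hgce).symm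
    _ ≤ eLpNorm (hf.toLp f : α → ℝ) 2 μ := eLpNorm_condExpL2_le hm _
    _ = eLpNorm f 2 μ := eLpNorm_congr_ae hf.coeFn_toLp

/-- Conditional expectation commutes with composition by a measurable map. -/
theorem condexp_comp_map {Ω X : Type*} {𝒢 : MeasurableSpace X} [mΩ : MeasurableSpace Ω]
    [mX : MeasurableSpace X]
    (P : Measure Ω) [IsProbabilityMeasure P] {Φ : Ω → X} (hΦ : Measurable Φ)
    (h𝒢 : 𝒢 ≤ mX) {F : X → ℝ} (hF : Integrable F (P.map Φ)) :
    (fun ω => ((P.map Φ)[F|𝒢]) (Φ ω)) =ᵐ[P]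
      P[(fun ω' => F (Φ ω')) | MeasurableSpace.comap Φ 𝒢] := by
  haveI : IsProbabilityMeasure (P.map Φ) := Measure.isProbabilityMeasure_map hΦ.aemeasurable
  have hm : MeasurableSpace.comap Φ 𝒢 ≤ mΩ :=
    le_trans (MeasurableSpace.comap_mono h𝒢) hΦ.comap_le
  haveI : SigmaFinite (P.trim hm) := (isFiniteMeasure_trim hm).toSigmaFinite
  have hcem : AEStronglyMeasurable ((P.map Φ)[F|𝒢]) (P.map Φ) :=
    (stronglyMeasurable_condExp.mono h𝒢).aestronglyMeasurable
  have hFΦ : Integrable (fun ω' => F (Φ ω')) P :=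
    (integrable_map_measure hF.1 hΦ.aemeasurable).mp hF
  have hGint : Integrable (fun ω => ((P.map Φ)[F|𝒢]) (Φ ω)) P := by
    have := integrable_condExp (μ := P.map Φ) (m := 𝒢) (f := F)
    exact (integrable_map_measure this.1 hΦ.aemeasurable).mp this
  refine ae_eq_condExp_of_forall_setIntegral_eq hm hFΦ
    (fun s _ _ => hGint.integrableOn) ?_ ?_
  · rintro s ⟨t, ht, rfl⟩ _
    have h1 : ∫ y in t, ((P.map Φ)[F|𝒢]) y ∂(P.map Φ)
        = ∫ ω in Φ ⁻¹' t, ((P.map Φ)[F|𝒢]) (Φ ω) ∂P :=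
      setIntegral_map (h𝒢 t ht) hcem hΦ.aemeasurable
    have h2 : ∫ y in t, F y ∂(P.map Φ) = ∫ ω in Φ ⁻¹' t, F (Φ ω) ∂P :=
      setIntegral_map (h𝒢 t ht) hF.1 hΦ.aemeasurable
    rw [← h1, ← h2]
    exact setIntegral_condExp h𝒢 hF ht
  · exact (stronglyMeasurable_condExp.comp_measurable
      (Measurable.of_comap_le le_rfl)).aestronglyMeasurable

/-- Transfer of the deviation quantity along a measurable map. -/
theorem quantity_comp_map {Ω X : Type*} {𝒢 : MeasurableSpace X} [mΩ : MeasurableSpace Ω]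
    [mX : MeasurableSpace X]
    (P : Measure Ω) [IsProbabilityMeasure P] {Φ : Ω → X} (hΦ : Measurable Φ)
    (h𝒢 : 𝒢 ≤ mX) {F : X → ℝ} (hF : Integrable F (P.map Φ)) :
    eLpNorm (fun ω => (P[(fun ω' => F (Φ ω')) | MeasurableSpace.comap Φ 𝒢]) ω
        - ∫ ω', F (Φ ω') ∂P) 2 P
      = eLpNorm (fun x => ((P.map Φ)[F|𝒢]) x - ∫ x, F x ∂(P.map Φ)) 2 (P.map Φ) := by
  have hint : ∫ x, F x ∂(P.map Φ) = ∫ ω', F (Φ ω') ∂P := integral_map hΦ.aemeasurable hF.1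
  have hcem : AEStronglyMeasurable
      (fun x => ((P.map Φ)[F|𝒢]) x - ∫ x, F x ∂(P.map Φ)) (P.map Φ) :=
    (stronglyMeasurable_condExp.mono h𝒢).aestronglyMeasurable.sub aestronglyMeasurable_const
  rw [eLpNorm_map_measure hcem hΦ.aemeasurable]
  refine eLpNorm_congr_ae ?_ |>.symm
  have h1 := condexp_comp_map P hΦ h𝒢 hF
  filter_upwards [h1] with ω hω
  simp only [Function.comp_apply, hω, hint]

/-- ℒ²-membership of a Lipschitz (for `d₁`) function of an ℒ² random vector. -/
theorem memLp_two_lip_comp {Ω : Type*} [MeasurableSpace Ω] {P : Measure Ω}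
    [IsProbabilityMeasure P] {l : ℕ} {f : (Fin l → ℝ) → ℝ} (hfm : Measurable f)
    (hflip : ∀ x y, |f x - f y| ≤ ∑ i, |x i - y i|)
    {u : Fin l → Ω → ℝ} (hu : ∀ s, MemLp (u s) 2 P) (hum : ∀ s, Measurable (u s)) :
    MemLp (fun ω => f (fun s => u s ω)) 2 P := by
  have hmeas : Measurable fun ω => f (fun s => u s ω) :=
    hfm.comp (measurable_pi_lambda _ hum)
  have h2 : MemLp (fun ω => |f 0| + ∑ s, |u s ω|) 2 P := by
    refine (memLp_const (|f 0|)).add ?_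
    have h := memLp_finset_sum' (μ := P) (p := 2) Finset.univ
      (f := fun s : Fin l => |u s|) (fun s _ => (hu s).abs)
    convert h using 1
    funext ω
    simp [Finset.sum_apply]
  refine h2.of_le hmeas.aestronglyMeasurable (Eventually.of_forall fun ω => ?_)
  have h3 : |f (fun s => u s ω) - f 0| ≤ ∑ s, |u s ω| := by
    simpa using hflip (fun s => u s ω) 0
  have h4 : |f (fun s => u s ω)| ≤ |f 0| + ∑ s, |u s ω| := by
    have := abs_sub_abs_le_abs_sub (f (fun s => u s ω)) (f 0)
    linarith [abs_nonneg (f 0)]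
  rw [Real.norm_eq_abs, Real.norm_eq_abs]
  refine h4.trans (le_abs_self _)

theorem theta2_aux
    {Ω : Type*} [MeasurableSpace Ω] (P : Measure Ω) [IsProbabilityMeasure P]
    {S : Type*} [MeasurableSpace S]
    (e eP : ℤ → Ω → S)
    (hemeas : ∀ i, Measurable (e i)) (hePmeas : ∀ i, Measurable (eP i))
    (hstat : Measure.map (fun ω (i : ℤ) => e (i + 1) ω) P =
      Measure.map (fun ω (i : ℤ) => e i ω) P)
    (hident : Measure.map (fun ω (i : ℤ) => eP i ω) P =
      Measure.map (fun ω (i : ℤ) => e i ω) P)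
    (hindep : Indep (⨆ i : ℤ, MeasurableSpace.comap (eP i) inferInstance)
      (⨆ i : ℤ, ⨆ _ : i ≤ 0, MeasurableSpace.comap (e i) inferInstance) P)
    (H : (ℕ → S) → ℝ) (hH : Measurable H)
    (ξ ξstar : ℤ → Ω → ℝ)
    (hξ : ∀ n ω, ξ n ω = H (fun m : ℕ => e (n - m) ω))
    (hξstar : ∀ n ω, ξstar n ω = H (fun m : ℕ => eP (n - m) ω))
    (hξL2 : ∀ n, MemLp (ξ n) 2 P)
    (δ₂ : ℕ → ℝ)
    (hδmono : ∀ i j : ℕ, 1 ≤ i → i ≤ j → δ₂ j ≤ δ₂ i)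
    (hδbd : ∀ i : ℕ, 1 ≤ i →
      (eLpNorm (P[(fun ω => |ξ i ω - ξstar i ω|) | natFilt ξ 0]) 2 P).toReal ≤ δ₂ i)
    (n : ℕ) (hn : 1 ≤ n)
    (l : ℕ) (hl : 1 ≤ l) (p : ℤ) (j : Fin l → ℤ) (hge : ∀ s, p + (n : ℤ) ≤ j s) :
    theta2Coef P (natFilt ξ p) (fun ω s => ξ (j s) ω) ≤ l * δ₂ n := by
  -- basic objects
  have hδ0 : 0 ≤ δ₂ n := le_trans ENNReal.toReal_nonneg (hδbd n hn)
  set Φ : Ω → ℤ → S := fun ω (i : ℤ) => e i ω with hΦdef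
  set Φ' : Ω → ℤ → S := fun ω (i : ℤ) => eP i ω with hΦ'def
  have hΦ : Measurable Φ := measurable_pi_lambda _ hemeas
  have hΦ' : Measurable Φ' := measurable_pi_lambda _ hePmeas
  haveI : IsProbabilityMeasure (P.map Φ) := Measure.isProbabilityMeasure_map hΦ.aemeasurable
  set G : ℤ → (ℤ → S) → ℝ := fun r x => H (fun m : ℕ => x (r - m)) with hGdef
  have hG : ∀ r, Measurable (G r) := fun r =>
    hH.comp (measurable_pi_lambda _ fun m => measurable_pi_apply _)
  have hξE : ∀ r, ξ r = fun ω => G r (Φ ω) := by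
    intro r; funext ω; rw [hξ r ω]
  have hξstarE : ∀ r, ξstar r = fun ω => G r (Φ' ω) := by
    intro r; funext ω; rw [hξstar r ω]
  have hξm : ∀ r, Measurable (ξ r) := fun r => by rw [hξE r]; exact (hG r).comp hΦ
  have hξstarm : ∀ r, Measurable (ξstar r) := fun r => by
    rw [hξstarE r]; exact (hG r).comp hΦ'
  set τ : ℤ → (ℤ → S) → ℤ → S := fun p x i => x (i + p) with hτdef
  have hτ : ∀ p, Measurable (τ p) := fun p =>
    measurable_pi_lambda _ fun i => measurable_pi_apply _
  have hτcomp : ∀ a b : ℤ, τ a ∘ τ b = τ (a + b) := by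
    intro a b; funext x i
    simp only [hτdef, Function.comp_apply]
    congr 1; omega
  have hτ0 : τ 0 = id := by funext x i; simp [hτdef]
  have hGτ : ∀ a b : ℤ, (G a ∘ τ b) = G (a + b) := by
    intro a b; funext x
    simp only [hGdef, hτdef, Function.comp_apply]
    congr 1; funext m; congr 1; omega
  -- shift invariance
  have hmap1 : (P.map Φ).map (τ 1) = P.map Φ := by
    rw [Measure.map_map (hτ 1) hΦ]
    have h : τ 1 ∘ Φ = fun ω (i : ℤ) => e (i + 1) ω := by
      funext ω i; simp [hτdef, hΦdef]
    rw [h]; exact hstat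
  have hmapneg : (P.map Φ).map (τ (-1)) = P.map Φ := by
    conv_lhs => rw [← hmap1]
    rw [Measure.map_map (hτ (-1)) (hτ 1), hτcomp,
      show (-1 : ℤ) + 1 = 0 from by norm_num, hτ0, Measure.map_id]
  have hinv : ∀ p : ℤ, (P.map Φ).map (τ p) = P.map Φ := by
    intro p
    induction p using Int.induction_on with
    | zero => rw [hτ0, Measure.map_id]
    | succ k ih =>
        rw [show ((k : ℤ) + 1) = 1 + k from by omega, ← hτcomp,
          ← Measure.map_map (hτ 1) (hτ k), ih, hmap1]
    | pred k ih =>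
        rw [show (-(k : ℤ) - 1) = -1 + -(k : ℤ) from by omega, ← hτcomp,
          ← Measure.map_map (hτ (-1)) (hτ (-(k:ℤ))), ih, hmapneg]
  -- σ-algebras on the sequence space
  set Cg : ℤ → MeasurableSpace (ℤ → S) :=
    fun r => MeasurableSpace.comap (G r) inferInstance with hCgdef
  have hCgle : ∀ p : ℤ, cylFilt Cg p ≤ (inferInstance : MeasurableSpace (ℤ → S)) := by
    intro p
    show (⨆ r : ℤ, ⨆ _ : r ≤ p, Cg r) ≤ _
    refine iSup₂_le fun r _ => ?_
    rw [hCgdef]; exact (hG r).comap_le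
  have hcomapτ : ∀ p : ℤ,
      MeasurableSpace.comap (τ p) (cylFilt Cg 0) = cylFilt Cg p := by
    intro p
    have h1 : MeasurableSpace.comap (τ p) (cylFilt Cg 0)
        = ⨆ r : ℤ, ⨆ _ : r ≤ (0:ℤ), Cg (r + p) := by
      show MeasurableSpace.comap (τ p) (⨆ r : ℤ, ⨆ _ : r ≤ (0:ℤ), Cg r) = _
      simp only [MeasurableSpace.comap_iSup]
      refine iSup_congr fun r => iSup_congr fun _ => ?_
      simp only [hCgdef]
      rw [MeasurableSpace.comap_comp, hGτ r p]
    rw [h1, cylFilt_shift]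
  have hNat : ∀ p : ℤ, natFilt ξ p = MeasurableSpace.comap Φ (cylFilt Cg p) := by
    intro p
    have h2 : MeasurableSpace.comap Φ (cylFilt Cg p)
        = ⨆ r : ℤ, ⨆ _ : r ≤ p, MeasurableSpace.comap Φ (Cg r) := by
      show MeasurableSpace.comap Φ (⨆ r : ℤ, ⨆ _ : r ≤ p, Cg r) = _
      simp only [MeasurableSpace.comap_iSup]
    show (⨆ r : ℤ, ⨆ _ : r ≤ p, MeasurableSpace.comap (ξ r) inferInstance) = _
    rw [h2]
    refine iSup_congr fun r => iSup_congr fun _ => ?_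
    have hcomp : G r ∘ Φ = ξ r := by rw [hξE r]; rfl
    simp only [hCgdef]
    rw [MeasurableSpace.comap_comp, hcomp]
  have hNat0le : natFilt ξ 0 ≤ ‹MeasurableSpace Ω› := by
    rw [hNat 0]
    exact (MeasurableSpace.comap_mono (hCgle 0)).trans hΦ.comap_le
  haveI hSF : SigmaFinite (P.trim hNat0le) := (isFiniteMeasure_trim hNat0le).toSigmaFinite
  -- reduce to a single Lipschitz function
  refine Real.sSup_le ?_ (mul_nonneg (Nat.cast_nonneg l) hδ0)
  rintro r ⟨f, hfm, hflip, rfl⟩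
  beta_reduce
  -- shifted indices
  set q : Fin l → ℤ := fun s => j s - p with hqdef
  have hqn : ∀ s, (n : ℤ) ≤ q s := by
    intro s; simp only [hqdef]; have := hge s; omega
  -- functions on the sequence space
  set FJ : (ℤ → S) → ℝ := fun x => f (fun s => G (j s) x) with hFJdef
  set FQ : (ℤ → S) → ℝ := fun x => f (fun s => G (q s) x) with hFQdef
  have hFJm : Measurable FJ := hfm.comp (measurable_pi_lambda _ fun s => hG _)
  have hFQm : Measurable FQ := hfm.comp (measurable_pi_lambda _ fun s => hG _)
  have hYJ : (fun ω => FJ (Φ ω)) = fun ω => f (fun s => ξ (j s) ω) := by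
    funext ω; simp only [hFJdef]; congr 1; funext s
    exact (congrFun (hξE (j s)) ω).symm
  have hYQ : (fun ω => FQ (Φ ω)) = fun ω => f (fun s => ξ (q s) ω) := by
    funext ω; simp only [hFQdef]; congr 1; funext s
    exact (congrFun (hξE (q s)) ω).symm
  have hYQ' : (fun ω => FQ (Φ' ω)) = fun ω => f (fun s => ξstar (q s) ω) := by
    funext ω; simp only [hFQdef]; congr 1; funext s
    exact (congrFun (hξstarE (q s)) ω).symm
  -- integrability
  have hstar2 : ∀ r : ℤ, MemLp (ξstar r) 2 P := by
    intro r
    have h1 : MemLp (fun ω => G r (Φ ω)) 2 P := by rw [← hξE r]; exact hξL2 r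
    have h2 : MemLp (G r) 2 (P.map Φ) :=
      (memLp_map_measure_iff (hG r).aestronglyMeasurable hΦ.aemeasurable).mpr h1
    rw [← hident] at h2
    have h3 := (memLp_map_measure_iff (hG r).aestronglyMeasurable hΦ'.aemeasurable).mp h2
    rw [hξstarE r]; exact h3
  have hJ2 : MemLp (fun ω => f (fun s => ξ (j s) ω)) 2 P :=
    memLp_two_lip_comp hfm hflip (fun s => hξL2 _) (fun s => hξm _)
  have hQ2 : MemLp (fun ω => f (fun s => ξ (q s) ω)) 2 P :=
    memLp_two_lip_comp hfm hflip (fun s => hξL2 _) (fun s => hξm _)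
  have hQstar2 : MemLp (fun ω => f (fun s => ξstar (q s) ω)) 2 P :=
    memLp_two_lip_comp hfm hflip (fun s => hstar2 _) (fun s => hξstarm _)
  have hFJ2 : MemLp FJ 2 (P.map Φ) := by
    refine (memLp_map_measure_iff hFJm.aestronglyMeasurable hΦ.aemeasurable).mpr ?_
    have := hJ2; rw [← hYJ] at this; exact this
  have hFQ2 : MemLp FQ 2 (P.map Φ) := by
    refine (memLp_map_measure_iff hFQm.aestronglyMeasurable hΦ.aemeasurable).mpr ?_
    have := hQ2; rw [← hYQ] at this; exact this
  have hFJint : Integrable FJ (P.map Φ) := hFJ2.integrable one_le_two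
  have hFQint : Integrable FQ (P.map Φ) := hFQ2.integrable one_le_two
  have hFQτint : Integrable FQ ((P.map Φ).map (τ p)) := by
    rw [hinv p]; exact hFQint
  -- chain of equalities transferring to p = 0
  have hgoal_eq : eLpNorm (fun ω =>
        (P[(fun ω' => f (fun s => ξ (j s) ω')) | natFilt ξ p]) ω
          - ∫ ω', f (fun s => ξ (j s) ω') ∂P) 2 P
      = eLpNorm (fun ω =>
        (P[(fun ω' => f (fun s => ξ (q s) ω')) | natFilt ξ 0]) ω
          - ∫ ω', f (fun s => ξ (q s) ω') ∂P) 2 P := by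
    have hA := quantity_comp_map (𝒢 := cylFilt Cg p) P hΦ (hCgle p) hFJint
    rw [hYJ, ← hNat p] at hA
    have hB := quantity_comp_map (𝒢 := cylFilt Cg 0) (P.map Φ) (hτ p) (hCgle 0) hFQτint
    rw [hinv p, hcomapτ p] at hB
    have hFQτ : (fun x' => FQ (τ p x')) = FJ := by
      funext x; simp only [hFQdef, hFJdef]; congr 1; funext s
      have h5 := congrFun (hGτ (q s) p) x
      simp only [Function.comp_apply] at h5
      rw [h5]
      congr 2
      simp only [hqdef]; omega
    rw [hFQτ] at hB
    have hC := quantity_comp_map (𝒢 := cylFilt Cg 0) P hΦ (hCgle 0) hFQint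
    rw [hYQ, ← hNat 0] at hC
    rw [hA, hB, ← hC]
  rw [hgoal_eq]
  -- core estimate at time 0
  set Y : Ω → ℝ := fun ω => f (fun s => ξ (q s) ω) with hYdef
  set Ystar : Ω → ℝ := fun ω => f (fun s => ξstar (q s) ω) with hYstardef
  have hYint : Integrable Y P := hQ2.integrable one_le_two
  have hYstarint : Integrable Ystar P := hQstar2.integrable one_le_two
  -- conditional expectation of Ystar is constant
  have hYstarm0 : Measurable[⨆ i : ℤ, MeasurableSpace.comap (eP i) inferInstance] Ystar := by
    refine Measurable.of_comap_le ?_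
    have hYc : Ystar = f ∘ (fun ω (s : Fin l) => ξstar (q s) ω) := by rw [hYstardef]; rfl
    rw [hYc, ← MeasurableSpace.comap_comp]
    refine le_trans (MeasurableSpace.comap_mono hfm.comap_le) ?_
    have hpi : (MeasurableSpace.pi : MeasurableSpace (Fin l → ℝ))
        = ⨆ s : Fin l, MeasurableSpace.comap (fun x : Fin l → ℝ => x s) inferInstance := rfl
    rw [hpi, MeasurableSpace.comap_iSup]
    refine iSup_le fun s => ?_
    rw [MeasurableSpace.comap_comp]
    have hc : ((fun x : Fin l → ℝ => x s) ∘ (fun ω (s : Fin l) => ξstar (q s) ω))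
        = ξstar (q s) := rfl
    rw [hc, hξstarE (q s)]
    have hc2 : (fun ω => G (q s) (Φ' ω)) = G (q s) ∘ Φ' := rfl
    rw [hc2, ← MeasurableSpace.comap_comp]
    refine le_trans (MeasurableSpace.comap_mono (hG (q s)).comap_le) ?_
    have hpi2 : (MeasurableSpace.pi : MeasurableSpace (ℤ → S))
        = ⨆ i : ℤ, MeasurableSpace.comap (fun x : ℤ → S => x i) inferInstance := rfl
    rw [hpi2, MeasurableSpace.comap_iSup]
    refine iSup_le fun i => ?_
    rw [MeasurableSpace.comap_comp]
    have hc3 : ((fun x : ℤ → S => x i) ∘ Φ') = eP i := rfl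
    rw [hc3]
    exact le_iSup (fun i => MeasurableSpace.comap (eP i) inferInstance) i
  have hD1 : P[Ystar|natFilt ξ 0] =ᵐ[P] fun _ => ∫ ω, Ystar ω ∂P := by
    refine condExp_indep_eq (iSup_le fun i => (hePmeas i).comap_le) hNat0le
      hYstarm0.stronglyMeasurable (indep_of_indep_of_le_right hindep ?_)
    show (⨆ r : ℤ, ⨆ _ : r ≤ (0:ℤ), MeasurableSpace.comap (ξ r) inferInstance) ≤ _
    refine iSup₂_le fun r hr => ?_
    have hem : Measurable[⨆ i : ℤ, ⨆ _ : i ≤ (0:ℤ),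
        MeasurableSpace.comap (e i) inferInstance] (ξ r) := by
      refine Measurable.of_comap_le ?_
      have hfe : ξ r = H ∘ (fun ω (m : ℕ) => e (r - ↑m) ω) := funext fun ω => hξ r ω
      rw [hfe, ← MeasurableSpace.comap_comp]
      refine le_trans (MeasurableSpace.comap_mono hH.comap_le) ?_
      have hpi : (MeasurableSpace.pi : MeasurableSpace (ℕ → S))
          = ⨆ m : ℕ, MeasurableSpace.comap (fun x : ℕ → S => x m) inferInstance := rfl
      rw [hpi, MeasurableSpace.comap_iSup]
      refine iSup_le fun m => ?_
      rw [MeasurableSpace.comap_comp]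
      have hc : ((fun x : ℕ → S => x m) ∘ (fun ω (m : ℕ) => e (r - ↑m) ω)) = e (r - ↑m) := rfl
      rw [hc]
      exact le_iSup₂_of_le (r - m) (by omega) le_rfl
    exact hem.comap_le
  -- equal integrals
  have hD2 : ∫ ω, Ystar ω ∂P = ∫ ω, Y ω ∂P := by
    have e1 : ∫ x, FQ x ∂(P.map Φ') = ∫ ω, Ystar ω ∂P := by
      rw [integral_map hΦ'.aemeasurable hFQm.aestronglyMeasurable]
      rw [hYQ']
    have e2 : ∫ x, FQ x ∂(P.map Φ) = ∫ ω, Y ω ∂P := by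
      rw [integral_map hΦ.aemeasurable hFQm.aestronglyMeasurable]
      rw [hYQ]
    rw [← e1, ← e2, hident]
  -- the deviation is a conditional expectation of the difference
  have hD3 : (fun ω => (P[Y|natFilt ξ 0]) ω - ∫ ω', Y ω' ∂P)
      =ᵐ[P] P[Y - Ystar|natFilt ξ 0] := by
    have hsub := condExp_sub (μ := P) (m := natFilt ξ 0) hYint hYstarint
    filter_upwards [hsub, hD1] with ω h1 h2
    simp only [Pi.sub_apply] at h1 ⊢
    rw [h1, h2, hD2]
  -- pointwise domination
  set Z : Fin l → Ω → ℝ := fun s ω => |ξ (q s) ω - ξstar (q s) ω| with hZdef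
  have hZ2 : ∀ s, MemLp (Z s) 2 P := by
    intro s
    have h := ((hξL2 (q s)).sub (hstar2 (q s))).abs
    have heq : Z s = |ξ (q s) - ξstar (q s)| := by
      funext ω; simp [hZdef, Pi.abs_apply, Pi.sub_apply]
    rw [heq]; exact h
  have hZint : ∀ s, Integrable (Z s) P := fun s => (hZ2 s).integrable one_le_two
  set W : Ω → ℝ := fun ω => ∑ s, Z s ω with hWdef
  have hW : W = ∑ s, Z s := by
    funext ω; rw [hWdef]; simp [Finset.sum_apply]
  have hWint : Integrable W P := by rw [hW]; exact integrable_finset_sum' _ fun s _ => hZint s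
  have hle1 : (Y - Ystar : Ω → ℝ) ≤ᵐ[P] W := by
    refine Eventually.of_forall fun ω => ?_
    refine (le_abs_self _).trans ?_
    simp only [Pi.sub_apply, hYdef, hYstardef, hWdef, hZdef]
    exact hflip _ _
  have hle2 : (-(Y - Ystar) : Ω → ℝ) ≤ᵐ[P] W := by
    refine Eventually.of_forall fun ω => ?_
    refine (le_abs_self _).trans ?_
    rw [Pi.neg_apply, abs_neg]
    simp only [Pi.sub_apply, hYdef, hYstardef, hWdef, hZdef]
    exact hflip _ _
  have hmono1 := condExp_mono (μ := P) (m := natFilt ξ 0) (hYint.sub hYstarint) hWint hle1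
  have hmono2 := condExp_mono (μ := P) (m := natFilt ξ 0) (hYint.sub hYstarint).neg hWint hle2
  have hneg := condExp_neg (μ := P) (m := natFilt ξ 0) (Y - Ystar)
  have habs_cond : ∀ᵐ ω ∂P,
      |(P[Y - Ystar|natFilt ξ 0]) ω| ≤ (P[W|natFilt ξ 0]) ω := by
    filter_upwards [hmono1, hmono2, hneg.symm.le, hneg.le] with ω h1 h2 h3 h4
    rw [abs_le]
    constructor
    · have h5 : -(P[Y - Ystar|natFilt ξ 0]) ω ≤ (P[W|natFilt ξ 0]) ω := by
        calc -(P[Y - Ystar|natFilt ξ 0]) ω = (-(P[Y - Ystar|natFilt ξ 0])) ω := rfl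
          _ ≤ (P[-(Y - Ystar)|natFilt ξ 0]) ω := h3
          _ ≤ (P[W|natFilt ξ 0]) ω := h2
      linarith
    · exact h1
  have hsum_cond : P[W|natFilt ξ 0] =ᵐ[P] ∑ s, P[Z s|natFilt ξ 0] := by
    rw [hW]
    exact condExp_finsetSum (fun s _ => hZint s) _
  -- eLpNorm bound
  have hkey : eLpNorm (fun ω => (P[Y|natFilt ξ 0]) ω - ∫ ω', Y ω' ∂P) 2 P
      ≤ ∑ s : Fin l, eLpNorm (P[Z s|natFilt ξ 0]) 2 P := by
    rw [eLpNorm_congr_ae hD3]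
    refine le_trans (eLpNorm_mono_ae ?_)
      (eLpNorm_sum_le (f := fun s => P[Z s|natFilt ξ 0]) (s := Finset.univ) (fun s _ =>
        (stronglyMeasurable_condExp.mono hNat0le).aestronglyMeasurable) one_le_two)
    filter_upwards [habs_cond, hsum_cond] with ω h1 h2
    rw [Real.norm_eq_abs, Real.norm_eq_abs]
    refine h1.trans ?_
    rw [h2]
    exact le_abs_self _
  have hZcond_ne : ∀ s : Fin l, eLpNorm (P[Z s|natFilt ξ 0]) 2 P ≠ ∞ := fun s =>
    (lt_of_le_of_lt (eLpNorm_two_condexp_le hNat0le (hZ2 s)) (hZ2 s).2).ne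
  -- conclusion
  calc (eLpNorm (fun ω => (P[Y|natFilt ξ 0]) ω - ∫ ω', Y ω' ∂P) 2 P).toReal
      ≤ (∑ s : Fin l, eLpNorm (P[Z s|natFilt ξ 0]) 2 P).toReal := by
        refine ENNReal.toReal_mono ?_ hkey
        rw [← lt_top_iff_ne_top]
        exact ENNReal.sum_lt_top.mpr fun s _ => (hZcond_ne s).lt_top
    _ = ∑ s : Fin l, (eLpNorm (P[Z s|natFilt ξ 0]) 2 P).toReal :=
        ENNReal.toReal_sum fun s _ => hZcond_ne s
    _ ≤ ∑ _s : Fin l, δ₂ n := by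
        refine Finset.sum_le_sum fun s _ => ?_
        have h6 := hqn s
        have hq1 : (1 : ℤ) ≤ q s := le_trans (by exact_mod_cast hn) (hqn s)
        have hNq : (((q s).toNat : ℤ)) = q s := Int.toNat_of_nonneg (by omega)
        have hNn : n ≤ (q s).toNat := by omega
        have hb := hδbd (q s).toNat (by omega)
        rw [hNq] at hb
        simp only [hZdef]
        exact hb.trans (hδmono n (q s).toNat hn hNn)
    _ = l * δ₂ n := by
        rw [Finset.sum_const, Finset.card_univ, Fintype.card_fin, nsmul_eq_mul]



/-- **Example 1 (causal functions of stationary sequences).** Let `(ε_i)_{i∈ℤ}` be a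
stationary sequence with values in a measurable space `S`, `H` measurable with
`ξ_n = H(ε_n, ε_{n-1}, …)` square-integrable. If `(ε´_i)` is distributed as `(ε_i)` and
independent of `(ε_i)_{i≤0}`, `ξ*_n = H(ε´_n, ε´_{n-1}, …)`, `ℳ_i = σ(ξ_j, j ≤ i)`, and
`(δ₂(i))_{i>0}` is non-increasing with `‖E(|ξ_i - ξ*_i| | ℳ₀)‖₂ ≤ δ₂(i)`, then
`θ₂(i) ≤ δ₂(i)` for all `i ≥ 1`. -/
theorem theta2_causal_function_le
    {Ω : Type*} [MeasurableSpace Ω] (P : Measure Ω) [IsProbabilityMeasure P]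
    {S : Type*} [MeasurableSpace S]
    (e eP : ℤ → Ω → S)
    (hemeas : ∀ i, Measurable (e i)) (hePmeas : ∀ i, Measurable (eP i))
    -- stationarity of `(ε_i)`
    (hstat : Measure.map (fun ω (i : ℤ) => e (i + 1) ω) P =
      Measure.map (fun ω (i : ℤ) => e i ω) P)
    -- `(ε´_i)` is distributed as `(ε_i)`
    (hident : Measure.map (fun ω (i : ℤ) => eP i ω) P =
      Measure.map (fun ω (i : ℤ) => e i ω) P)
    -- `(ε´_i)_{i∈ℤ}` is independent of `(ε_i)_{i≤0}`
    (hindep : Indep (⨆ i : ℤ, MeasurableSpace.comap (eP i) inferInstance)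
      (⨆ i : ℤ, ⨆ _ : i ≤ 0, MeasurableSpace.comap (e i) inferInstance) P)
    (H : (ℕ → S) → ℝ) (hH : Measurable H)
    (ξ ξstar : ℤ → Ω → ℝ)
    (hξ : ∀ n ω, ξ n ω = H (fun m : ℕ => e (n - m) ω))
    (hξstar : ∀ n ω, ξstar n ω = H (fun m : ℕ => eP (n - m) ω))
    (hξL2 : ∀ n, MemLp (ξ n) 2 P)
    (δ₂ : ℕ → ℝ)
    (hδmono : ∀ i j : ℕ, 1 ≤ i → i ≤ j → δ₂ j ≤ δ₂ i)
    (hδbd : ∀ i : ℕ, 1 ≤ i →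
      (eLpNorm (P[(fun ω => |ξ i ω - ξstar i ω|) | natFilt ξ 0]) 2 P).toReal ≤ δ₂ i) :
    ∀ i : ℕ, 1 ≤ i → theta2Seq P (natFilt ξ) ξ i ≤ δ₂ i := by
  intro n hn
  have hδ0 : 0 ≤ δ₂ n := le_trans ENNReal.toReal_nonneg (hδbd n hn)
  refine Real.sSup_le ?_ hδ0
  rintro r ⟨k, hk, rfl⟩
  refine Real.sSup_le ?_ hδ0
  rintro r ⟨l, hl1, hlk, p, j, hmono, hge, rfl⟩
  have h := theta2_aux P e eP hemeas hePmeas hstat hident hindep H hH ξ ξstar hξ hξstar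
    hξL2 δ₂ hδmono hδbd n hn l hl1 p j hge
  have hl0 : (0:ℝ) < l := by exact_mod_cast hl1
  calc (1 / l : ℝ) * theta2Coef P (natFilt ξ p) (fun ω s => ξ (j s) ω)
      ≤ (1 / l : ℝ) * (l * δ₂ n) := by
        refine mul_le_mul_of_nonneg_left h (by positivity)
    _ = δ₂ n := by field_simp
end
end

section
/- Let 0 < ε < 1 and δ_ε = (1 − ε² + 2ε)/2. There exists κ_ε ≥ 1 such that for every integer v ≥ κ_ε the following holds. Let m = [v^ε], let b_1, …, b_v be non-negative real numbers, and define B = { u ∈ ℕ : (v − [v^{δ_ε}])/2 ≤ um ≤ v/2 } and A = { u ∈ ℕ : 0 ≤ u ≤ v and Σ_{i=um+1}^{(u+1)m} b_i ≤ (m/v)^ε Σ_{i=1}^v b_i }. Then the cardinality of A ∩ B satisfies |A ∩ B| ≥ (v^{(1−ε²)/2}/2)(1 − 4 v^{−(1−ε)²/2}) − 3/2; in particular κ_ε can be chosen large enough that A ∩ B is nonempty for all v ≥ κ_ε. -/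
open Filter Finset

lemma blk_disjoint (m : ℕ) {u u' : ℕ} (h : u ≠ u') :
    Disjoint (Finset.Icc (u * m + 1) ((u + 1) * m))
      (Finset.Icc (u' * m + 1) ((u' + 1) * m)) := by
  rw [Finset.disjoint_left]
  intro i hi hi'
  rw [Finset.mem_Icc] at hi hi'
  rcases Nat.lt_or_ge u u' with hlt | hge
  · have : (u + 1) * m ≤ u' * m := Nat.mul_le_mul_right _ hlt
    omega
  · have h2 : u' < u := by omega
    have : (u' + 1) * m ≤ u * m := Nat.mul_le_mul_right _ h2
    omega

set_option maxHeartbeats 1600000 in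
/-- **Counting lemma (after Utev, 1991).** Let `0 < ε < 1` and `δ_ε = (1 - ε² + 2ε)/2`.
There exists `κ_ε ≥ 1` such that for every integer `v ≥ κ_ε` the following holds. With
`m = [v^ε]`, for non-negative reals `b_1, …, b_v`, setting
`B = {u ∈ ℕ : (v - [v^{δ_ε}])/2 ≤ um ≤ v/2}` and
`A = {u ∈ ℕ : u ≤ v ∧ ∑_{i=um+1}^{(u+1)m} b_i ≤ (m/v)^ε ∑_{i=1}^v b_i}`, one has
`|A ∩ B| ≥ (v^{(1-ε²)/2}/2)(1 - 4 v^{-(1-ε)²/2}) - 3/2`, and `A ∩ B` is nonempty. -/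
theorem good_block_exists
    (ε : ℝ) (hε0 : 0 < ε) (hε1 : ε < 1)
    (δ : ℝ) (hδ : δ = (1 - ε ^ 2 + 2 * ε) / 2) :
    ∃ κ : ℝ, 1 ≤ κ ∧
      ∀ v : ℕ, κ ≤ (v : ℝ) →
        ∀ b : ℕ → ℝ, (∀ i, 0 ≤ b i) →
          ∀ m : ℕ, m = ⌊(v : ℝ) ^ ε⌋₊ →
            ∀ A B : Set ℕ,
              B = {u : ℕ | ((v : ℝ) - ⌊(v : ℝ) ^ δ⌋₊) / 2 ≤ u * m ∧ (u * m : ℝ) ≤ v / 2} →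
              A = {u : ℕ | u ≤ v ∧
                  ∑ i ∈ Finset.Icc (u * m + 1) ((u + 1) * m), b i ≤
                    ((m : ℝ) / v) ^ ε * ∑ i ∈ Finset.Icc 1 v, b i} →
              ((v : ℝ) ^ ((1 - ε ^ 2) / 2) / 2) * (1 - 4 * (v : ℝ) ^ (-(1 - ε) ^ 2 / 2)) -
                  3 / 2 ≤ ((A ∩ B).ncard : ℝ) ∧
                (A ∩ B).Nonempty := by
  have h1ε : (0 : ℝ) < 1 - ε := by linarith
  set γ : ℝ := (2 : ℝ) ^ (-(1 / ε)) with hγdef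
  have hγ0 : 0 < γ := Real.rpow_pos_of_pos (by norm_num) _
  have hγ1 : γ < 1 :=
    Real.rpow_lt_one_of_one_lt_of_neg (by norm_num) (neg_lt_zero.mpr (by positivity))
  have hev : ∀ᶠ x : ℝ in atTop,
      1 ≤ x ∧ 1 / (1 - γ) ≤ x ^ ε ∧ 2 ≤ x ^ (1 - ε) ∧
      8 ≤ x ^ ((1 - ε) ^ 2 / 2) ∧ 8 ≤ x ^ ((1 - ε ^ 2) / 2) := by
    filter_upwards [eventually_ge_atTop 1,
      (tendsto_rpow_atTop hε0).eventually_ge_atTop (1 / (1 - γ)),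
      (tendsto_rpow_atTop h1ε).eventually_ge_atTop 2,
      (tendsto_rpow_atTop (by positivity : (0 : ℝ) < (1 - ε) ^ 2 / 2)).eventually_ge_atTop 8,
      (tendsto_rpow_atTop (by nlinarith : (0 : ℝ) < (1 - ε ^ 2) / 2)).eventually_ge_atTop 8]
      with x h1 h2 h3 h4 h5
    exact ⟨h1, h2, h3, h4, h5⟩
  obtain ⟨κ₀, hκ₀⟩ := eventually_atTop.mp hev
  refine ⟨max κ₀ 1, le_max_right _ _, ?_⟩
  intro v hv b hb m hm A B hB hA
  obtain ⟨hx1, hx2, hx3, hx4, hx5⟩ := hκ₀ (v : ℝ) (le_trans (le_max_left _ _) hv)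
  set x : ℝ := (v : ℝ) with hxdef
  have hxpos : 0 < x := lt_of_lt_of_le one_pos hx1
  -- basic facts about m
  have hxε1 : 1 ≤ x ^ ε := by
    calc (1 : ℝ) = 1 ^ ε := (Real.one_rpow ε).symm
      _ ≤ x ^ ε := Real.rpow_le_rpow zero_le_one hx1 hε0.le
  have hm1 : 1 ≤ m := by
    rw [hm]; exact Nat.le_floor (by exact_mod_cast hxε1)
  have hmle : (m : ℝ) ≤ x ^ ε := by rw [hm]; exact Nat.floor_le (by positivity)
  have hmgt : x ^ ε < (m : ℝ) + 1 := by rw [hm]; exact Nat.lt_floor_add_one _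
  have hm0 : (0 : ℝ) < (m : ℝ) := by exact_mod_cast hm1
  have hge : 1 ≤ x ^ ε * (1 - γ) := (div_le_iff₀ (by linarith)).mp hx2
  have hmγ : x ^ ε * γ ≤ (m : ℝ) := by nlinarith
  have hxsplit : x ^ ε * x ^ (1 - ε) = x := by
    rw [← Real.rpow_add hxpos]; norm_num
  have hm_half : (m : ℝ) ≤ x / 2 := by
    have h2x : x ^ ε * 2 ≤ x := by
      calc x ^ ε * 2 ≤ x ^ ε * x ^ (1 - ε) :=
            mul_le_mul_of_nonneg_left hx3 (by positivity)
        _ = x := hxsplit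
    linarith
  -- facts about δ
  have hδ1 : δ ≤ 1 := by nlinarith [sq_nonneg (1 - ε)]
  have hδ0 : 0 < δ := by nlinarith
  have hxδ_le : x ^ δ ≤ x := by
    calc x ^ δ ≤ x ^ (1 : ℝ) := Real.rpow_le_rpow_of_exponent_le hx1 hδ1
      _ = x := Real.rpow_one x
  have hxδ1 : 1 ≤ x ^ δ := by
    calc (1 : ℝ) = 1 ^ δ := (Real.one_rpow δ).symm
      _ ≤ x ^ δ := Real.rpow_le_rpow zero_le_one hx1 hδ0.le
  set W : ℕ := ⌊x ^ δ⌋₊ with hWdef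
  have hWx : (W : ℝ) ≤ x := le_trans (Nat.floor_le (by positivity)) hxδ_le
  have hWgt : x ^ δ < (W : ℝ) + 1 := Nat.lt_floor_add_one _
  set L : ℝ := (x - (W : ℝ)) / 2 with hLdef
  have hL0 : 0 ≤ L := by rw [hLdef]; linarith
  set a : ℕ := ⌈L / (m : ℝ)⌉₊ with hadef
  set c : ℕ := ⌊x / 2 / (m : ℝ)⌋₊ with hcdef
  set BF : Finset ℕ := Finset.Icc a c with hBFdef
  -- B as a Finset
  have hBset : B = ↑BF := by
    rw [hB]
    ext u
    simp only [hBFdef, Finset.coe_Icc, Set.mem_Icc, Set.mem_setOf_eq]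
    constructor
    · rintro ⟨h1, h2⟩
      exact ⟨Nat.ceil_le.mpr ((div_le_iff₀ hm0).mpr h1),
        Nat.le_floor ((le_div_iff₀ hm0).mpr h2)⟩
    · rintro ⟨h1, h2⟩
      constructor
      · have := le_trans (Nat.ceil_le.mp le_rfl : L / (m : ℝ) ≤ (a : ℝ))
          (by exact_mod_cast h1 : (a : ℝ) ≤ (u : ℝ))
        exact (div_le_iff₀ hm0).mp this
      · have := le_trans (by exact_mod_cast h2 : (u : ℝ) ≤ (c : ℝ))
          (Nat.floor_le (by positivity) : (c : ℝ) ≤ x / 2 / (m : ℝ))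
        exact (le_div_iff₀ hm0).mp this
  -- every u in BF satisfies u*m ≤ R and u ≤ v
  have humR : ∀ u ∈ BF, (u : ℝ) * m ≤ x / 2 := by
    intro u hu
    have huc : u ≤ c := (Finset.mem_Icc.mp hu).2
    have h1 : (u : ℝ) ≤ x / 2 / m :=
      le_trans (by exact_mod_cast huc) (Nat.floor_le (by positivity))
    exact (le_div_iff₀ hm0).mp h1
  have huv : ∀ u ∈ BF, u ≤ v := by
    intro u hu
    have h1 : (u : ℝ) ≤ (u : ℝ) * m := le_mul_of_one_le_right (Nat.cast_nonneg u) (by exact_mod_cast hm1)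
    have h2 := humR u hu
    have : (u : ℝ) ≤ (v : ℝ) := by rw [← hxdef]; linarith
    exact_mod_cast this
  -- blocks of elements of BF lie in [1, v]
  have hblkv : ∀ u ∈ BF, (u + 1) * m ≤ v := by
    intro u hu
    have h2 := humR u hu
    have h3 : ((u : ℝ) + 1) * m ≤ x := by
      rw [add_mul, one_mul]
      linarith [h2, hm_half]
    have h4 : (((u + 1) * m : ℕ) : ℝ) ≤ (v : ℝ) := by push_cast; rw [← hxdef]; linarith
    exact_mod_cast h4
  have hublk : ∀ u ∈ BF, Finset.Icc (u * m + 1) ((u + 1) * m) ⊆ Finset.Icc 1 v := by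
    intro u hu i hi
    rw [Finset.mem_Icc] at hi ⊢
    have := hblkv u hu
    omega
  -- the sum S and threshold t
  set S : ℝ := ∑ i ∈ Finset.Icc 1 v, b i with hSdef
  have hS0 : 0 ≤ S := Finset.sum_nonneg fun i _ => hb i
  set t : ℝ := ((m : ℝ) / x) ^ ε with htdef
  have ht0 : 0 < t := Real.rpow_pos_of_pos (by positivity) _
  set DF : Finset ℕ :=
    BF.filter (fun u => ¬ (∑ i ∈ Finset.Icc (u * m + 1) ((u + 1) * m), b i ≤ t * S)) with hDFdef
  have hDFsub : DF ⊆ BF := Finset.filter_subset _ _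
  -- sum over disjoint blocks
  have hdisj : (↑DF : Set ℕ).PairwiseDisjoint
      (fun u => Finset.Icc (u * m + 1) ((u + 1) * m)) := by
    intro u _ u' _ hne
    exact blk_disjoint m hne
  have hsum : ∑ u ∈ DF, (∑ i ∈ Finset.Icc (u * m + 1) ((u + 1) * m), b i) ≤ S := by
    rw [← Finset.sum_biUnion hdisj]
    apply Finset.sum_le_sum_of_subset_of_nonneg
    · intro i hi
      rw [Finset.mem_biUnion] at hi
      obtain ⟨u, hu, hiu⟩ := hi
      exact hublk u (hDFsub hu) hiu
    · intro i _ _; exact hb i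
  -- bound on DF.card
  have hDFcard : (DF.card : ℝ) ≤ (x / m) ^ ε := by
    rcases eq_or_lt_of_le hS0 with hSe | hSp
    · have hDFe : DF = ∅ := by
        rw [Finset.filter_eq_empty_iff]
        intro u hu
        rw [not_not]
        have hle : ∑ i ∈ Finset.Icc (u * m + 1) ((u + 1) * m), b i ≤ S :=
          Finset.sum_le_sum_of_subset_of_nonneg (hublk u hu) fun i _ _ => hb i
        have htS : t * S = 0 := by rw [← hSe]; ring
        linarith
      rw [hDFe]
      simp only [Finset.card_empty, Nat.cast_zero]
      positivity
    · have hlow : (DF.card : ℝ) * (t * S) ≤ S := by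
        calc (DF.card : ℝ) * (t * S) = ∑ _u ∈ DF, t * S := by
              rw [Finset.sum_const, nsmul_eq_mul]
          _ ≤ ∑ u ∈ DF, ∑ i ∈ Finset.Icc (u * m + 1) ((u + 1) * m), b i := by
              apply Finset.sum_le_sum
              intro u hu
              exact le_of_lt (lt_of_not_ge (Finset.mem_filter.mp hu).2)
          _ ≤ S := hsum
      have hmulone : (x / m) ^ ε * t = 1 := by
        rw [htdef, ← Real.mul_rpow (by positivity) (by positivity)]
        have : x / (m : ℝ) * ((m : ℝ) / x) = 1 := by field_simp
        rw [this, Real.one_rpow]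
      have hct : (DF.card : ℝ) * t ≤ 1 := by
        rcases le_or_gt ((DF.card : ℝ) * t) 1 with h | h
        · exact h
        · exfalso; nlinarith [mul_pos (sub_pos.2 h) hSp]
      have : (DF.card : ℝ) * t ≤ (x / m) ^ ε * t := by linarith [hmulone]
      exact le_of_mul_le_mul_right this ht0
  -- (x/m)^ε ≤ 2 x^(ε - ε²)
  have hγε : γ ^ ε = 1 / 2 := by
    rw [hγdef, ← Real.rpow_mul (by norm_num : (0:ℝ) ≤ 2)]
    have hne : (-(1 / ε)) * ε = -1 := by field_simp
    rw [hne, Real.rpow_neg_one]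
    norm_num
  have hbound2 : (x / m) ^ ε ≤ 2 * x ^ (ε - ε ^ 2) := by
    have h1 : x / m ≤ x ^ (1 - ε) / γ := by
      rw [div_le_div_iff₀ hm0 hγ0]
      calc x * γ = x ^ (1 - ε) * (x ^ ε * γ) := by
            rw [← mul_assoc, mul_comm (x ^ (1 - ε)) (x ^ ε), hxsplit]
        _ ≤ x ^ (1 - ε) * m := by
            apply mul_le_mul_of_nonneg_left hmγ (by positivity)
    have hexp : (1 - ε) * ε = ε - ε ^ 2 := by ring
    calc (x / m) ^ ε ≤ (x ^ (1 - ε) / γ) ^ ε :=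
          Real.rpow_le_rpow (by positivity) h1 hε0.le
      _ = (x ^ (1 - ε)) ^ ε / γ ^ ε := Real.div_rpow (by positivity : (0:ℝ) ≤ x ^ (1 - ε)) hγ0.le ε
      _ = x ^ ((1 - ε) * ε) / (1 / 2) := by
          rw [← Real.rpow_mul hxpos.le, hγε]
      _ = 2 * x ^ (ε - ε ^ 2) := by rw [hexp]; ring
  -- lower bound on BF.card
  have hcardBF : ((BF.card : ℝ)) ≥ (x / 2 - L) / m - 1 := by
    have h1 : (a : ℝ) < L / m + 1 := Nat.ceil_lt_add_one (by positivity)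
    have h2 : x / 2 / m < (c : ℝ) + 1 := Nat.lt_floor_add_one _
    rcases le_or_gt a c with h | h
    · rw [hBFdef, Nat.card_Icc]
      have hcast : ((c + 1 - a : ℕ) : ℝ) = (c : ℝ) + 1 - a := by
        rw [Nat.cast_sub (by omega)]; push_cast; ring
      rw [hcast, sub_div]
      linarith
    · rw [hBFdef, Finset.Icc_eq_empty (by omega)]
      simp only [Finset.card_empty, Nat.cast_zero, ge_iff_le, sub_div]
      have h3 : (c : ℝ) + 1 ≤ a := by exact_mod_cast h
      linarith
  -- identify A ∩ B with BF \ DF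
  have hABset : A ∩ B = ↑(BF \ DF) := by
    rw [hA, hBset]
    ext u
    simp only [Set.mem_inter_iff, Set.mem_setOf_eq, Finset.coe_sdiff, Set.mem_diff,
      Finset.mem_coe, hDFdef, Finset.mem_filter, not_and, not_not]
    constructor
    · rintro ⟨⟨_, h2⟩, h3⟩
      refine ⟨h3, fun _ => ?_⟩
      rw [htdef, hSdef, hxdef]
      exact h2
    · rintro ⟨h1, h2⟩
      have h2' := h2 h1
      rw [htdef, hSdef] at h2'
      exact ⟨⟨huv u h1, h2'⟩, h1⟩
  -- cardinality computation
  have hcardAB : ((A ∩ B).ncard : ℝ) = (BF.card : ℝ) - DF.card := by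
    rw [hABset, Set.ncard_coe_finset, Finset.card_sdiff_of_subset hDFsub,
      Nat.cast_sub (Finset.card_le_card hDFsub)]
  -- final estimates
  have hDF2 : (DF.card : ℝ) ≤ 2 * x ^ (ε - ε ^ 2) := le_trans hDFcard hbound2
  have hRL : x / 2 - L = (W : ℝ) / 2 := by rw [hLdef]; ring
  have hnum : 0 ≤ x ^ δ - 1 := by linarith
  have hBF2 : (x ^ δ - 1) / (2 * x ^ ε) - 1 ≤ (BF.card : ℝ) := by
    have h5 : (x ^ δ - 1) / (2 * x ^ ε) ≤ (x ^ δ - 1) / (2 * m) := by gcongr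
    have h6 : (x ^ δ - 1) / (2 * m) ≤ (x / 2 - L) / m := by
      rw [hRL, div_div]
      gcongr
      linarith only [hWgt]
    linarith only [h5, h6, hcardBF]
  -- exponent identities
  have e1 : x ^ δ = x ^ ((1 - ε ^ 2) / 2) * x ^ ε := by
    rw [← Real.rpow_add hxpos]; congr 1; rw [hδ]; ring
  have e2 : x ^ ((1 - ε ^ 2) / 2) * x ^ (-(1 - ε) ^ 2 / 2) = x ^ (ε - ε ^ 2) := by
    rw [← Real.rpow_add hxpos]; congr 1; ring
  have e4 : (x ^ δ - 1) / (2 * x ^ ε) = x ^ ((1 - ε ^ 2) / 2) / 2 - 1 / (2 * x ^ ε) := by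
    rw [e1]; field_simp
  have e5 : 1 / (2 * x ^ ε) ≤ 1 / 2 := by
    rw [div_le_div_iff₀ (by positivity) (by norm_num)]
    linarith only [hxε1]
  have hmain : x ^ ((1 - ε ^ 2) / 2) / 2 * (1 - 4 * x ^ (-(1 - ε) ^ 2 / 2)) - 3 / 2
      ≤ ((A ∩ B).ncard : ℝ) := by
    rw [hcardAB]
    have key : x ^ ((1 - ε ^ 2) / 2) / 2 * (1 - 4 * x ^ (-(1 - ε) ^ 2 / 2))
        = x ^ ((1 - ε ^ 2) / 2) / 2 - 2 * x ^ (ε - ε ^ 2) := by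
      rw [← e2]; ring
    rw [key]
    linarith only [hDF2, hBF2, e4, e5]
  refine ⟨hmain, ?_⟩
  -- nonemptiness
  have hQinv : x ^ (-(1 - ε) ^ 2 / 2) ≤ 1 / 8 := by
    have hq : x ^ (-(1 - ε) ^ 2 / 2) = (x ^ ((1 - ε) ^ 2 / 2))⁻¹ := by
      rw [← Real.rpow_neg hxpos.le]; congr 1; ring
    rw [hq]
    calc (x ^ ((1 - ε) ^ 2 / 2))⁻¹ ≤ (8 : ℝ)⁻¹ := by
          apply inv_anti₀ (by norm_num) hx4
      _ = 1 / 8 := by norm_num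
  have hQ0 : 0 ≤ x ^ (-(1 - ε) ^ 2 / 2) := by positivity
  have hpos : (0 : ℝ) < ((A ∩ B).ncard : ℝ) := by
    have : (1 : ℝ) / 2 ≤ x ^ ((1 - ε ^ 2) / 2) / 2 * (1 - 4 * x ^ (-(1 - ε) ^ 2 / 2)) - 3 / 2 := by
      nlinarith only [mul_nonneg (by linarith only [hx5] : (0:ℝ) ≤ x ^ ((1 - ε ^ 2) / 2) - 8)
        (by linarith only [hQinv] : (0:ℝ) ≤ 1 / 8 - x ^ (-(1 - ε) ^ 2 / 2)), hx5, hQinv, hQ0]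
    linarith only [this, hmain]
  have hne : (A ∩ B).ncard ≠ 0 := by
    intro h
    rw [h] at hpos
    norm_num at hpos
  exact Set.nonempty_of_ncard_ne_zero hne
end
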